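/- Let X be a finite species set and 𝒯 a set of MUL-trees with label sets contained in X. For any integer d, there exists a duplication tree on X consistent with every MUL-tree in 𝒯 that has at most d duplication nodes on every directed path from the root to a leaf if and only if there exists a beaded tree on X weakly displaying every MUL-tree in 𝒯 that has at most d beads on every directed path. -/

import Mathlib

/-!
Common formal framework for MUL-trees, phylogenetic networks, beaded trees,
duplication trees, weak embeddings and related operations, following
van Iersel, Janssen, Jones, Murakami, Zeh,
"Polynomial-Time Algorithms for Phylogenetic Inference Problems involving
duplication and reticulation".

All graphs are directed multigraphs on natural-number vertices, given by a
finite vertex set, an edge-multiplicity function and a (partial) leaf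
labelling by species (also natural numbers).
-/

open scoped Classical

structure DG where
  verts : Finset ℕ
  mult : ℕ → ℕ → ℕ
  label : ℕ → Option ℕ

namespace DG

/-- An arc is a pair of endpoints together with the index of the parallel copy. -/
abbrev Arc := ℕ × ℕ × ℕ

def Adj (G : DG) (u v : ℕ) : Prop := 0 < G.mult u v

def outDeg (G : DG) (u : ℕ) : ℕ := ∑ v ∈ G.verts, G.mult u v
def inDeg (G : DG) (v : ℕ) : ℕ := ∑ u ∈ G.verts, G.mult u v

/-- `G.Reaches u v` : `u` is an ancestor of `v` (possibly `u = v`). -/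
def Reaches (G : DG) : ℕ → ℕ → Prop := Relation.ReflTransGen G.Adj
/-- `G.SReaches u v` : `u` is a strict ancestor of `v` (in an acyclic graph). -/
def SReaches (G : DG) : ℕ → ℕ → Prop := Relation.TransGen G.Adj
def Acyclic (G : DG) : Prop := ∀ v, ¬ G.SReaches v v

def IsRoot (G : DG) (v : ℕ) : Prop := v ∈ G.verts ∧ G.inDeg v = 0 ∧ G.outDeg v = 1
def IsLeafNode (G : DG) (v : ℕ) : Prop := v ∈ G.verts ∧ G.inDeg v = 1 ∧ G.outDeg v = 0
def IsTreeNode (G : DG) (v : ℕ) : Prop := v ∈ G.verts ∧ G.inDeg v = 1 ∧ G.outDeg v = 2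
def IsRetic (G : DG) (v : ℕ) : Prop := v ∈ G.verts ∧ G.inDeg v = 2 ∧ G.outDeg v = 1
def IsDupNode (G : DG) (v : ℕ) : Prop := v ∈ G.verts ∧ G.inDeg v = 1 ∧ G.outDeg v = 1

/-- The reticulation number: the number of reticulation nodes. -/
def reticNum (G : DG) : ℕ := (G.verts.filter (fun v => G.inDeg v = 2 ∧ G.outDeg v = 1)).card
/-- The duplication number: the number of duplication nodes. -/
def dupNum (G : DG) : ℕ := (G.verts.filter (fun v => G.inDeg v = 1 ∧ G.outDeg v = 1)).card
/-- The number of beads (counted by their bottom nodes). -/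
noncomputable def beadNum (G : DG) : ℕ :=
  (G.verts.filter (fun v => ∃ u ∈ G.verts, G.mult u v = 2)).card

def Supported (G : DG) : Prop := ∀ u v, G.Adj u v → u ∈ G.verts ∧ v ∈ G.verts
/-- Exactly the leaves carry labels. -/
def LabelsOnLeaves (G : DG) : Prop := ∀ v, (∃ x, G.label v = some x) ↔ G.IsLeafNode v

/-- The number of leaves (= labelled nodes). -/
def numLeaves (G : DG) : ℕ := (G.verts.filter (fun v => (G.label v).isSome)).card

/-- A multi-labelled tree (MUL-tree) with labels contained in `X`. -/
structure IsMulTree (X : Finset ℕ) (G : DG) : Prop where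
  root : ∃! r, G.IsRoot r
  nodes : ∀ v ∈ G.verts, G.IsRoot v ∨ G.IsTreeNode v ∨ G.IsLeafNode v
  acyclic : G.Acyclic
  simple : ∀ u v, G.mult u v ≤ 1
  supported : G.Supported
  labels : G.LabelsOnLeaves
  labelsSub : ∀ v x, G.label v = some x → x ∈ X

/-- A rooted binary phylogenetic network on `X` (parallel edges allowed). -/
structure IsNetwork (X : Finset ℕ) (G : DG) : Prop where
  root : ∃! r, G.IsRoot r
  nodes : ∀ v ∈ G.verts, G.IsRoot v ∨ G.IsTreeNode v ∨ G.IsRetic v ∨ G.IsLeafNode v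
  acyclic : G.Acyclic
  supported : G.Supported
  labels : G.LabelsOnLeaves
  labelsSub : ∀ v x, G.label v = some x → x ∈ X
  labelsOnto : ∀ x ∈ X, ∃! v, G.label v = some x

/-- A duplication tree on `X`. -/
structure IsDupTree (X : Finset ℕ) (G : DG) : Prop where
  root : ∃! r, G.IsRoot r
  nodes : ∀ v ∈ G.verts, G.IsRoot v ∨ G.IsTreeNode v ∨ G.IsDupNode v ∨ G.IsLeafNode v
  acyclic : G.Acyclic
  simple : ∀ u v, G.mult u v ≤ 1
  supported : G.Supported
  labels : G.LabelsOnLeaves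
  labelsSub : ∀ v x, G.label v = some x → x ∈ X
  labelsOnto : ∀ x ∈ X, ∃! v, G.label v = some x

/-- A beaded tree: a phylogenetic network in which every reticulation node is
the bottom node of a bead (a pair of parallel edges). -/
def IsBeadedTree (X : Finset ℕ) (G : DG) : Prop :=
  IsNetwork X G ∧ ∀ v ∈ G.verts, G.inDeg v = 2 → ∃ u, G.mult u v = 2

def ArcOK (G : DG) (e : Arc) : Prop := e.2.2 < G.mult e.1 e.2.1

/-- `G.IsWalk p a b` : `p` is a (nonempty) directed path of arcs from `a` to `b`. -/
def IsWalk (G : DG) (p : List Arc) (a b : ℕ) : Prop :=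
  p ≠ [] ∧ (∀ e ∈ p, G.ArcOK e) ∧
  List.Chain' (fun e f : Arc => e.2.1 = f.1) p ∧
  p.head?.map Prod.fst = some a ∧
  p.getLast?.map (fun e => e.2.1) = some b

/-- `v` is a node visited by the walk `p`. -/
def OnWalk (p : List Arc) (v : ℕ) : Prop := ∃ e ∈ p, e.1 = v ∨ e.2.1 = v

/-- A weak embedding of a MUL-tree `T` into a network `N`: nodes map to nodes,
edges map to directed paths and the two paths out of an internal node start
with different out-edges. -/
def WeakEmbedding (T N : DG) (h : ℕ → ℕ) (hE : ℕ → ℕ → List Arc) : Prop :=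
  (∀ v ∈ T.verts, h v ∈ N.verts) ∧
  (∀ v, T.IsLeafNode v → N.IsLeafNode (h v) ∧ N.label (h v) = T.label v) ∧
  (∀ u v, T.Adj u v → N.IsWalk (hE u v) (h u) (h v)) ∧
  (∀ x y y', T.Adj x y → T.Adj x y' → y ≠ y' → (hE x y).head? ≠ (hE x y').head?)

/-- `N.Displays T` : `N` weakly displays `T`. -/
def Displays (N T : DG) : Prop := ∃ h hE, WeakEmbedding T N h hE

/-- `x` is a least common ancestor of `y` and `z`. -/
def IsLCA (G : DG) (x y z : ℕ) : Prop :=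
  G.Reaches x y ∧ G.Reaches x z ∧
  ∀ w, G.SReaches x w → ¬ (G.Reaches w y ∧ G.Reaches w z)

/-- A duplication mapping from a MUL-tree `T` to a duplication tree `D`. -/
def DupMapping (T D : DG) (M : ℕ → ℕ) : Prop :=
  (∀ v, T.IsLeafNode v → D.IsLeafNode (M v) ∧ D.label (M v) = T.label v) ∧
  (∀ u v, T.Adj u v → D.SReaches (M u) (M v)) ∧
  (∀ u v v', T.Adj u v → T.Adj u v' → v ≠ v' →
    D.IsLCA (M u) (M v) (M v') ∨ D.IsDupNode (M u))

/-- `D.ConsistentWith T` : there is a duplication mapping from `T` to `D`. -/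
def ConsistentWith (D T : DG) : Prop := ∃ M, DupMapping T D M

/-- A solution to Beaded Tree on `𝒯`: a beaded tree on `X` weakly displaying
every MUL-tree of `𝒯`. -/
def Solution (X : Finset ℕ) (Ts : Set DG) (B : DG) : Prop :=
  IsBeadedTree X B ∧ ∀ T ∈ Ts, B.Displays T

/-- An optimal solution: minimum reticulation number among all solutions. -/
def OptSolution (X : Finset ℕ) (Ts : Set DG) (B : DG) : Prop :=
  Solution X Ts B ∧ ∀ B', Solution X Ts B' → B.reticNum ≤ B'.reticNum

/-- Number of beads traversed by a walk. -/
def beadsOnWalk (G : DG) (p : List Arc) : ℕ :=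
  p.countP (fun e => decide (G.mult e.1 e.2.1 = 2))

/-- Number of duplication nodes traversed by a walk (as arc sources). -/
def dupsOnWalk (G : DG) (p : List Arc) : ℕ :=
  p.countP (fun e => decide (G.inDeg e.1 = 1 ∧ G.outDeg e.1 = 1))

/-- The bead depth: the maximum number of beads on any directed path. -/
noncomputable def beadDepth (G : DG) : ℕ :=
  sSup {n | ∃ p a b, G.IsWalk p a b ∧ G.beadsOnWalk p = n}

/-- A solution to Beaded Tree Depth of minimum bead depth. -/
def DepthOptSolution (X : Finset ℕ) (Ts : Set DG) (B : DG) : Prop :=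
  Solution X Ts B ∧ ∀ B', Solution X Ts B' → B.beadDepth ≤ B'.beadDepth

/-- The child of the root is the top node of a bead. -/
def HasBeadAtRoot (G : DG) : Prop :=
  ∃ r u v, G.IsRoot r ∧ G.Adj r u ∧ G.mult u v = 2

/-- `B` is obtained from `B'` by inserting a new bead `(u,v)` between the root
`r` of `B'` and its child `a`.  Equivalently, `B'` is obtained from `B` by
deleting `u` and `v` and adding an edge from the root to the child of `v`. -/
def AddBeadAtRoot (B' B : DG) : Prop :=
  ∃ r a u v, B'.IsRoot r ∧ B'.Adj r a ∧ u ∉ B'.verts ∧ v ∉ B'.verts ∧ u ≠ v ∧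
    B.verts = insert u (insert v B'.verts) ∧
    B.label = (fun w => if w = u ∨ w = v then none else B'.label w) ∧
    B.mult = (fun s t =>
      if s = r ∧ t = a then 0
      else if s = r ∧ t = u then 1
      else if s = u ∧ t = v then 2
      else if s = v ∧ t = a then 1
      else if s = u ∨ s = v ∨ t = u ∨ t = v then 0
      else B'.mult s t)

/-- `N` is obtained by joining `N1` and `N2`: the two roots are identified into
a single node `u`, which becomes the child of a new root `r`.  The embeddings
`f1`, `f2` realise the copies of `N1` and `N2` inside `N`. -/
def IsJoinOf (N N1 N2 : DG) : Prop :=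
  ∃ (f1 f2 : ℕ → ℕ) (r u : ℕ),
    N.IsRoot r ∧ u ∈ N.verts ∧ N.mult r u = 1 ∧
    Set.InjOn f1 N1.verts ∧ Set.InjOn f2 N2.verts ∧
    (∀ v, N1.IsRoot v → f1 v = u) ∧ (∀ v, N2.IsRoot v → f2 v = u) ∧
    (∀ w, w ∈ N.verts ↔ (w = r ∨ (∃ v ∈ N1.verts, f1 v = w) ∨ (∃ v ∈ N2.verts, f2 v = w))) ∧
    (∀ v1 ∈ N1.verts, ∀ v2 ∈ N2.verts, f1 v1 = f2 v2 → N1.IsRoot v1 ∧ N2.IsRoot v2) ∧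
    (∀ v ∈ N1.verts, f1 v ≠ r) ∧ (∀ v ∈ N2.verts, f2 v ≠ r) ∧
    (∀ a ∈ N1.verts, ∀ b ∈ N1.verts, N.mult (f1 a) (f1 b) = N1.mult a b) ∧
    (∀ a ∈ N2.verts, ∀ b ∈ N2.verts, N.mult (f2 a) (f2 b) = N2.mult a b) ∧
    (∀ a b, N.Adj a b →
      (a = r ∧ b = u) ∨
      (∃ a' ∈ N1.verts, ∃ b' ∈ N1.verts, f1 a' = a ∧ f1 b' = b ∧ N1.Adj a' b') ∨
      (∃ a' ∈ N2.verts, ∃ b' ∈ N2.verts, f2 a' = a ∧ f2 b' = b ∧ N2.Adj a' b')) ∧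
    (∀ v ∈ N1.verts, N.label (f1 v) = N1.label v) ∧
    (∀ v ∈ N2.verts, N.label (f2 v) = N2.label v) ∧
    N.label r = none

/-- Delete a node and all incident edges. -/
def deleteNode (G : DG) (v : ℕ) : DG where
  verts := G.verts.erase v
  mult := fun a b => if a = v ∨ b = v then 0 else G.mult a b
  label := fun a => if a = v then none else G.label a

/-- Suppress an in-degree-1 out-degree-1 node `v` with parent `p` and child `c`. -/
def suppressNode (G : DG) (v p c : ℕ) : DG where
  verts := G.verts.erase v
  mult := fun a b =>
    if a = v ∨ b = v then 0
    else if a = p ∧ b = c then G.mult a b + 1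
    else G.mult a b
  label := fun a => if a = v then none else G.label a

/-- One step of the restriction procedure for label set `S`: delete a leaf
labelled in `S` or an unlabelled node of out-degree 0, or suppress an
unlabelled node of in-degree 1 and out-degree 1. -/
inductive RStep (S : Finset ℕ) : DG → DG → Prop
  | del (G : DG) (v : ℕ) : v ∈ G.verts →
      ((∃ x ∈ S, G.label v = some x) ∨ (G.label v = none ∧ G.outDeg v = 0)) →
      RStep S G (G.deleteNode v)
  | suppress (G : DG) (v p c : ℕ) : v ∈ G.verts → G.label v = none →
      G.mult p v = 1 → G.inDeg v = 1 → G.mult v c = 1 → G.outDeg v = 1 →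
      RStep S G (G.suppressNode v p c)

/-- `Restricts S G G'` : `G' = G ∖ S`, i.e. `G'` is obtained from `G` by
deleting all leaves labelled in `S` and exhaustively deleting unlabelled nodes
of out-degree 0 and suppressing in-degree-1 out-degree-1 nodes. -/
def Restricts (S : Finset ℕ) (G G' : DG) : Prop :=
  Relation.ReflTransGen (RStep S) G G' ∧ ∀ H, ¬ RStep S G' H

/-- `𝒯 ∖ S` for a set of MUL-trees (empty results discarded). -/
def SetRestrict (S : Finset ℕ) (Ts : Set DG) : Set DG :=
  {T' | T'.verts.Nonempty ∧ ∃ T ∈ Ts, Restricts S T T'}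

/-- The member of the depth-1 forest of `T` keeping `y` and discarding the
subtree rooted at `y'` (here `r` is the root, `x` its child, `y,y'` the
children of `x`, which is suppressed). -/
noncomputable def f1del (T : DG) (r x y y' : ℕ) : DG where
  verts := (T.verts.filter (fun v => ¬ T.Reaches y' v)).erase x
  mult := fun a b =>
    if a = r ∧ b = y then 1
    else if a = x ∨ b = x ∨ T.Reaches y' a ∨ T.Reaches y' b then 0
    else T.mult a b
  label := fun v => if v = x ∨ T.Reaches y' v then none else T.label v

/-- `T'` is one of the two members of the depth-1 forest `F1(T)`. -/
def InF1 (T T' : DG) : Prop :=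
  ∃ r x y y', T.IsRoot r ∧ T.Adj r x ∧ T.Adj x y ∧ T.Adj x y' ∧ y ≠ y' ∧
    T' = f1del T r x y y'

/-- `F1(𝒯)`. -/
def F1Set (Ts : Set DG) : Set DG := {T' | ∃ T ∈ Ts, InF1 T T'}

/-- Two species labels occur in the same member of `F1(𝒯)`. -/
def SplitRel (Ts : Set DG) (a b : ℕ) : Prop :=
  ∃ T' ∈ F1Set Ts, (∃ u, T'.label u = some a) ∧ (∃ v, T'.label v = some b)

/-- `S` is one of the classes of the split partition of `X` for `𝒯`. -/
def SplitPart (X : Finset ℕ) (Ts : Set DG) (S : Finset ℕ) : Prop :=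
  ∃ a ∈ X, S = X.filter (fun b => Relation.EqvGen (SplitRel Ts) a b)

end DG

namespace DG

variable {G : DG} {a b c u v w : ℕ}

lemma adj_of_mult_pos {i : ℕ} (h : i < G.mult u v) : G.Adj u v := Nat.lt_of_le_of_lt (Nat.zero_le i) h

lemma mult_le_outDeg (hv : v ∈ G.verts) : G.mult u v ≤ G.outDeg u :=
  Finset.single_le_sum (fun _ _ => Nat.zero_le _) hv

lemma mult_le_inDeg (hu : u ∈ G.verts) : G.mult u v ≤ G.inDeg v :=
  Finset.single_le_sum (f := fun u => G.mult u v) (fun _ _ => Nat.zero_le _) hu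

lemma adj_pos_outDeg (hs : G.Supported) (h : G.Adj u v) : 0 < G.outDeg u :=
  lt_of_lt_of_le h (mult_le_outDeg (hs u v h).2)

lemma adj_pos_inDeg (hs : G.Supported) (h : G.Adj u v) : 0 < G.inDeg v :=
  lt_of_lt_of_le h (mult_le_inDeg (hs u v h).1)

noncomputable def rank (G : DG) (v : ℕ) : ℕ := (G.verts.filter (fun u => G.SReaches u v)).card

lemma rank_lt_of_adj (hs : G.Supported) (ha : G.Acyclic) (h : G.Adj u v) :
    G.rank u < G.rank v := by
  apply Finset.card_lt_card
  constructor
  · intro w hw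
    simp only [Finset.mem_filter] at hw ⊢
    exact ⟨hw.1, hw.2.tail h⟩
  · intro hsub
    have hu : u ∈ G.verts.filter (fun w => G.SReaches w v) := by
      simp only [Finset.mem_filter]
      exact ⟨(hs u v h).1, Relation.TransGen.single h⟩
    have := hsub hu
    simp only [Finset.mem_filter] at this
    exact ha u this.2

lemma lt_of_transGen {r : ℕ → ℕ → Prop} {ψ : ℕ → ℕ} (h : ∀ a b, r a b → ψ a < ψ b)
    (ht : Relation.TransGen r a b) : ψ a < ψ b := by
  induction ht with
  | single h' => exact h _ _ h'
  | tail _ h' ih => exact ih.trans (h _ _ h')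

lemma acyclic_of_measure {ψ : ℕ → ℕ} (h : ∀ a b, G.Adj a b → ψ a < ψ b) : G.Acyclic :=
  fun v hv => absurd (lt_of_transGen h hv) (lt_irrefl _)

lemma sreaches_of_reaches_ne (h : G.Reaches a b) (hne : a ≠ b) : G.SReaches a b := by
  rcases h.cases_head with rfl | ⟨c, hac, hcb⟩
  · exact absurd rfl hne
  · exact Relation.TransGen.head' hac hcb

lemma isWalk_cons {e : Arc} {p : List Arc} :
    G.IsWalk (e :: p) a b ↔
      (a = e.1 ∧ G.ArcOK e ∧ ((p = [] ∧ b = e.2.1) ∨ G.IsWalk p e.2.1 b)) := by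
  cases p with
  | nil =>
    constructor
    · rintro ⟨-, hok, -, hh, hl⟩
      simp only [List.head?_cons, List.getLast?_singleton, Option.map_some, Option.some_inj] at hh hl
      exact ⟨hh.symm, hok e (by simp), Or.inl ⟨rfl, hl.symm⟩⟩
    · rintro ⟨rfl, hok, h | h⟩
      · refine ⟨by simp, ?_, List.isChain_singleton _, by simp, by simp [h.2]⟩
        intro x hx
        rcases List.mem_singleton.mp hx with rfl
        exact hok
      · exact absurd rfl h.1
  | cons f q =>
    simp only [IsWalk, List.Chain', List.isChain_cons_cons, List.head?_cons, List.getLast?_cons_cons]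
    constructor
    · rintro ⟨-, hok, ⟨hef, hch⟩, hh, hl⟩
      simp only [Option.map_some, Option.some_inj] at hh
      refine ⟨hh.symm, hok e (by simp), Or.inr ?_⟩
      exact ⟨by simp, fun x hx => hok x (by simp [hx]), hch, by simp [hef], hl⟩
    · rintro ⟨rfl, hok, h | ⟨-, hok2, hch, hh, hl⟩⟩
      · exact absurd h.1 (by simp)
      · simp only [List.head?_cons, Option.map_some, Option.some_inj] at hh
        refine ⟨by simp, ?_, ⟨hh.symm, hch⟩, by simp, hl⟩
        intro x hx
        rcases List.mem_cons.mp hx with rfl | hx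
        · exact hok
        · exact hok2 x hx

lemma isWalk_singleton {e : Arc} (h : G.ArcOK e) : G.IsWalk [e] e.1 e.2.1 := by
  simp [isWalk_cons, h]

lemma IsWalk.append {p q : List Arc} (hp : G.IsWalk p a b) (hq : G.IsWalk q b c) :
    G.IsWalk (p ++ q) a c := by
  induction p generalizing a with
  | nil => exact absurd rfl hp.1
  | cons e p ih =>
    rw [isWalk_cons] at hp
    obtain ⟨rfl, hok, hrest⟩ := hp
    rcases hrest with ⟨rfl, rfl⟩ | hw
    · rw [List.cons_append, List.nil_append, isWalk_cons]
      exact ⟨rfl, hok, Or.inr hq⟩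
    · rw [List.cons_append, isWalk_cons]
      exact ⟨rfl, hok, Or.inr (ih hw)⟩

lemma IsWalk.reaches {p : List Arc} (hp : G.IsWalk p a b) : G.Reaches a b := by
  induction p generalizing a with
  | nil => exact absurd rfl hp.1
  | cons e p ih =>
    rw [isWalk_cons] at hp
    obtain ⟨rfl, hok, hrest⟩ := hp
    have hadj : G.Adj e.1 e.2.1 := adj_of_mult_pos hok
    rcases hrest with ⟨rfl, rfl⟩ | hw
    · exact Relation.ReflTransGen.single hadj
    · exact Relation.ReflTransGen.head hadj (ih hw)

lemma IsWalk.sreaches {p : List Arc} (hp : G.IsWalk p a b) : G.SReaches a b := by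
  induction p generalizing a with
  | nil => exact absurd rfl hp.1
  | cons e p ih =>
    rw [isWalk_cons] at hp
    obtain ⟨rfl, hok, hrest⟩ := hp
    have hadj : G.Adj e.1 e.2.1 := adj_of_mult_pos hok
    rcases hrest with ⟨rfl, rfl⟩ | hw
    · exact Relation.TransGen.single hadj
    · exact Relation.TransGen.head hadj (ih hw)

lemma exists_walk (h : G.SReaches a b) : ∃ p, G.IsWalk p a b := by
  induction h with
  | single h' => exact ⟨[(_, _, 0)], isWalk_singleton h'⟩
  | tail _ h' ih =>
    obtain ⟨p, hp⟩ := ih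
    exact ⟨p ++ [(_, _, 0)], hp.append (isWalk_singleton h')⟩

lemma IsWalk.start_mem {p : List Arc} (hs : G.Supported) (hp : G.IsWalk p a b) : a ∈ G.verts := by
  cases p with
  | nil => exact absurd rfl hp.1
  | cons e p =>
    rw [isWalk_cons] at hp
    obtain ⟨rfl, hok, -⟩ := hp
    exact (hs _ _ (adj_of_mult_pos hok)).1

lemma IsWalk.end_mem {p : List Arc} (hs : G.Supported) (hp : G.IsWalk p a b) : b ∈ G.verts := by
  induction p generalizing a with
  | nil => exact absurd rfl hp.1
  | cons e p ih =>
    rw [isWalk_cons] at hp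
    obtain ⟨rfl, hok, hrest⟩ := hp
    rcases hrest with ⟨rfl, rfl⟩ | hw
    · exact (hs _ _ (adj_of_mult_pos hok)).2
    · exact ih hw

lemma two_le_outDeg (hs : G.Supported) {c1 c2 i1 i2 : ℕ}
    (h1 : G.ArcOK (a, c1, i1)) (h2 : G.ArcOK (a, c2, i2)) (hne : (c1, i1) ≠ (c2, i2)) :
    2 ≤ G.outDeg a := by
  simp only [ArcOK] at h1 h2
  by_cases hc : c1 = c2
  · subst hc
    have : i1 ≠ i2 := fun h => hne (by rw [h])
    have h2m : 2 ≤ G.mult a c1 := by omega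
    calc 2 ≤ G.mult a c1 := h2m
    _ ≤ G.outDeg a := mult_le_outDeg (hs a c1 (by omega : 0 < G.mult a c1)).2
  · have m1 : 0 < G.mult a c1 := by omega
    have m2 : 0 < G.mult a c2 := by omega
    have hsub : {c1, c2} ⊆ G.verts := by
      intro x hx
      rcases Finset.mem_insert.mp hx with rfl | hx
      · exact (hs a x m1).2
      · rcases Finset.mem_singleton.mp hx with rfl
        exact (hs a x m2).2
    calc 2 = 1 + 1 := rfl
    _ ≤ G.mult a c1 + G.mult a c2 := by omega
    _ = ∑ x ∈ {c1, c2}, G.mult a x := (Finset.sum_pair hc).symm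
    _ ≤ G.outDeg a := Finset.sum_le_sum_of_subset hsub

lemma exists_two_children (hs : G.Supported) (hsimple : ∀ u v, G.mult u v ≤ 1)
    (h2 : G.outDeg a = 2) : ∃ z z', z ≠ z' ∧ G.Adj a z ∧ G.Adj a z' := by
  by_contra hcon
  push_neg at hcon
  have hle : G.outDeg a ≤ 1 := by
    by_cases hz : ∃ z, G.Adj a z
    · obtain ⟨z, hz⟩ := hz
      have hzv := (hs a z hz).2
      calc G.outDeg a = ∑ v ∈ G.verts, G.mult a v := rfl
      _ ≤ ∑ v ∈ G.verts, (if v = z then G.mult a v else 0) := by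
          apply Finset.sum_le_sum
          intro x hx
          by_cases hxz : x = z
          · simp [hxz]
          · simp only [if_neg hxz]
            by_contra hpos
            have hax : G.Adj a x := by simp only [Adj]; omega
            exact (hcon x z hxz hax) hz
      _ = G.mult a z := by rw [Finset.sum_ite_eq' G.verts z (fun v => G.mult a v), if_pos hzv]
      _ ≤ 1 := hsimple a z
    · push_neg at hz
      have hall : ∀ v ∈ G.verts, G.mult a v = 0 := by
        intro v _
        have := hz v
        simp only [Adj] at this
        omega
      calc G.outDeg a = 0 := Finset.sum_eq_zero hall
      _ ≤ 1 := by omega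
  omega

lemma adj_mem_pair (hs : G.Supported) (h2 : G.outDeg a = 2) {d1 d2 e : ℕ}
    (hd1 : G.Adj a d1) (hd2 : G.Adj a d2) (hne : d1 ≠ d2) (he : G.Adj a e) :
    e = d1 ∨ e = d2 := by
  by_contra hcon
  push_neg at hcon
  have hsub : {d1, d2, e} ⊆ G.verts := by
    intro x hx
    simp only [Finset.mem_insert, Finset.mem_singleton] at hx
    rcases hx with rfl | rfl | rfl
    · exact (hs a x hd1).2
    · exact (hs a x hd2).2
    · exact (hs a x he).2
  have h3 : 3 ≤ G.outDeg a := by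
    have hcard : 3 ≤ ∑ x ∈ ({d1, d2, e} : Finset ℕ), G.mult a x := by
      rw [Finset.sum_insert (by simp [hne, Ne.symm hcon.1]), Finset.sum_pair (Ne.symm hcon.2)]
      simp only [Adj] at hd1 hd2 he
      omega
    calc 3 ≤ ∑ x ∈ ({d1, d2, e} : Finset ℕ), G.mult a x := hcard
    _ ≤ G.outDeg a := Finset.sum_le_sum_of_subset hsub
  omega

/-- In a graph with all in-degrees ≤ 1, a node has at most one parent. -/
lemma unique_parent (hs : G.Supported) (hin : ∀ v ∈ G.verts, G.inDeg v ≤ 1)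
    {u u' : ℕ} (h1 : G.Adj u v) (h2 : G.Adj u' v) : u = u' := by
  by_contra hne
  have hv := (hs u v h1).2
  have h2d : 2 ≤ G.inDeg v := by
    have hsub : {u, u'} ⊆ G.verts := by
      intro x hx
      rcases Finset.mem_insert.mp hx with rfl | hx
      · exact (hs x v h1).1
      · rcases Finset.mem_singleton.mp hx with rfl
        exact (hs x v h2).1
    calc 2 = 1 + 1 := rfl
    _ ≤ G.mult u v + G.mult u' v := by simp only [Adj] at h1 h2; omega
    _ = ∑ x ∈ {u, u'}, G.mult x v := by rw [Finset.sum_pair hne]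
    _ ≤ G.inDeg v := Finset.sum_le_sum_of_subset hsub
  have := hin v hv
  omega

/-- In a "forest" the ancestors of a node form a chain. -/
lemma forest_chain (hs : G.Supported) (hin : ∀ v ∈ G.verts, G.inDeg v ≤ 1)
    (hza : G.Reaches a c) (hzb : G.Reaches b c) : G.Reaches a b ∨ G.Reaches b a := by
  induction hza using Relation.ReflTransGen.head_induction_on with
  | refl => exact Or.inr hzb
  | head hadj _ ih =>
    rcases ih with h | h
    · exact Or.inl (Relation.ReflTransGen.head hadj h)
    · rcases h.cases_tail with rfl | ⟨m, hbm, hmy⟩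
      · exact Or.inl (Relation.ReflTransGen.single hadj)
      · obtain rfl : m = _ := unique_parent hs hin hmy hadj
        exact Or.inr hbm

/-- Two distinct children of a node in a forest have disjoint descendant cones. -/
lemma forest_disjoint_cones (hs : G.Supported) (ha : G.Acyclic)
    (hin : ∀ v ∈ G.verts, G.inDeg v ≤ 1) {t d1 d2 z : ℕ}
    (h1 : G.Adj t d1) (h2 : G.Adj t d2) (hne : d1 ≠ d2)
    (r1 : G.Reaches d1 z) (r2 : G.Reaches d2 z) : False := by
  rcases forest_chain hs hin r1 r2 with h | h
  · rcases h.cases_tail with rfl | ⟨m, hdm, hmd2⟩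
    · exact hne rfl
    · obtain rfl : m = t := unique_parent hs hin hmd2 h2
      exact ha m (Relation.TransGen.head' h1 hdm)
  · rcases h.cases_tail with rfl | ⟨m, hdm, hmd1⟩
    · exact hne rfl
    · obtain rfl : m = t := unique_parent hs hin hmd1 h1
      exact ha m (Relation.TransGen.head' h2 hdm)

lemma rank_lt_card (ha : G.Acyclic) (hv : v ∈ G.verts) : G.rank v < G.verts.card := by
  apply Finset.card_lt_card
  refine ⟨fun x hx => (Finset.mem_filter.mp hx).1, fun hsub => ?_⟩
  have := hsub hv
  simp only [Finset.mem_filter] at this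
  exact ha v this.2

lemma exists_adj_parent (h0 : G.inDeg v ≠ 0) : ∃ u ∈ G.verts, G.Adj u v := by
  by_contra hno
  push_neg at hno
  refine h0 (Finset.sum_eq_zero fun u hu => ?_)
  have := hno u hu
  simp only [Adj] at this
  omega

lemma exists_adj_child (h0 : G.outDeg v ≠ 0) : ∃ u ∈ G.verts, G.Adj v u := by
  by_contra hno
  push_neg at hno
  refine h0 (Finset.sum_eq_zero fun u hu => ?_)
  have := hno u hu
  simp only [Adj] at this
  omega

lemma exists_walk_from_source_aux (hs : G.Supported) (ha : G.Acyclic) :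
    ∀ n v, G.rank v ≤ n → v ∈ G.verts →
      ∃ r, r ∈ G.verts ∧ G.inDeg r = 0 ∧ (r = v ∨ ∃ p, G.IsWalk p r v) := by
  intro n
  induction n with
  | zero =>
    intro v hn hv
    by_cases h0 : G.inDeg v = 0
    · exact ⟨v, hv, h0, Or.inl rfl⟩
    · obtain ⟨u, hu, huv⟩ := exists_adj_parent h0
      have := rank_lt_of_adj hs ha huv
      omega
  | succ n ih =>
    intro v hn hv
    by_cases h0 : G.inDeg v = 0
    · exact ⟨v, hv, h0, Or.inl rfl⟩
    · obtain ⟨u, hu, huv⟩ := exists_adj_parent h0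
      have hrk := rank_lt_of_adj hs ha huv
      obtain ⟨r, hr, hr0, hrw⟩ := ih u (by omega) hu
      refine ⟨r, hr, hr0, Or.inr ?_⟩
      have hw1 : G.IsWalk [(u, v, 0)] u v := isWalk_singleton (e := (u, v, 0)) huv
      rcases hrw with rfl | ⟨p, hp⟩
      · exact ⟨[(r, v, 0)], hw1⟩
      · exact ⟨p ++ [(u, v, 0)], hp.append hw1⟩

lemma exists_walk_from_source (hs : G.Supported) (ha : G.Acyclic) (hv : v ∈ G.verts) :
    ∃ r, r ∈ G.verts ∧ G.inDeg r = 0 ∧ (r = v ∨ ∃ p, G.IsWalk p r v) :=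
  exists_walk_from_source_aux hs ha (G.rank v) v le_rfl hv

lemma exists_walk_to_sink_aux (hs : G.Supported) (ha : G.Acyclic) :
    ∀ n v, G.verts.card - G.rank v ≤ n → v ∈ G.verts →
      ∃ l, l ∈ G.verts ∧ G.outDeg l = 0 ∧ (l = v ∨ ∃ p, G.IsWalk p v l) := by
  intro n
  induction n with
  | zero =>
    intro v hn hv
    have := rank_lt_card ha hv
    omega
  | succ n ih =>
    intro v hn hv
    by_cases h0 : G.outDeg v = 0
    · exact ⟨v, hv, h0, Or.inl rfl⟩
    · obtain ⟨u, hu, huv⟩ := exists_adj_child h0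
      have hrk := rank_lt_of_adj hs ha huv
      have hcu := rank_lt_card ha hu
      obtain ⟨l, hl, hl0, hlw⟩ := ih u (by omega) hu
      refine ⟨l, hl, hl0, Or.inr ?_⟩
      have hw1 : G.IsWalk [(v, u, 0)] v u := isWalk_singleton (e := (v, u, 0)) huv
      rcases hlw with rfl | ⟨p, hp⟩
      · exact ⟨[(v, l, 0)], hw1⟩
      · exact ⟨[(v, u, 0)] ++ p, hw1.append hp⟩

lemma exists_walk_to_sink (hs : G.Supported) (ha : G.Acyclic) (hv : v ∈ G.verts) :
    ∃ l, l ∈ G.verts ∧ G.outDeg l = 0 ∧ (l = v ∨ ∃ p, G.IsWalk p v l) :=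
  exists_walk_to_sink_aux hs ha (G.verts.card - G.rank v) v le_rfl hv


end DG

namespace DG

/-! ### Expansion of a duplication tree into a beaded tree -/

/-- Replace every duplication node `v` by a bead `(2v, 2v+1)`. -/
noncomputable def expand (D : DG) : DG where
  verts := D.verts.image (fun v => 2*v) ∪
    (D.verts.filter (fun v => D.inDeg v = 1 ∧ D.outDeg v = 1)).image (fun v => 2*v+1)
  mult := fun s t =>
    if s % 2 = 0 then
      if D.IsDupNode (s/2) then (if t = s + 1 then 2 else 0)
      else (if t % 2 = 0 then D.mult (s/2) (t/2) else 0)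
    else
      if D.IsDupNode (s/2) then (if t % 2 = 0 then D.mult (s/2) (t/2) else 0) else 0
  label := fun w => if w % 2 = 0 then D.label (w/2) else none

variable {D G : DG} {a b c u v w : ℕ}

lemma expand_mem {w : ℕ} :
    w ∈ (expand D).verts ↔
      ((∃ v ∈ D.verts, w = 2*v) ∨ (∃ v, D.IsDupNode v ∧ w = 2*v+1)) := by
  simp only [expand, Finset.mem_union, Finset.mem_image, Finset.mem_filter, IsDupNode]
  constructor
  · rintro (⟨v, hv, rfl⟩ | ⟨v, ⟨hv1, hv2⟩, rfl⟩)
    · exact Or.inl ⟨v, hv, rfl⟩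
    · exact Or.inr ⟨v, ⟨hv1, hv2⟩, rfl⟩
  · rintro (⟨v, hv, rfl⟩ | ⟨v, ⟨hv1, hv2⟩, rfl⟩)
    · exact Or.inl ⟨v, hv, rfl⟩
    · exact Or.inr ⟨v, ⟨hv1, hv2⟩, rfl⟩

lemma expand_mem_even {v : ℕ} (hv : v ∈ D.verts) : 2*v ∈ (expand D).verts :=
  expand_mem.mpr (Or.inl ⟨v, hv, rfl⟩)

lemma expand_mem_odd {v : ℕ} (hv : D.IsDupNode v) : 2*v+1 ∈ (expand D).verts :=
  expand_mem.mpr (Or.inr ⟨v, hv, rfl⟩)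

lemma expand_mult_ee (v w : ℕ) :
    (expand D).mult (2*v) (2*w) = if D.IsDupNode v then 0 else D.mult v w := by
  have h1 : (2*v) % 2 = 0 := by omega
  have h2 : (2*v) / 2 = v := by omega
  have h3 : (2*w) % 2 = 0 := by omega
  have h4 : (2*w) / 2 = w := by omega
  have h5 : ¬ (2*w = 2*v + 1) := by omega
  simp only [expand, h1, h2, h3, h4, if_pos rfl, if_neg h5]
  split_ifs <;> rfl

lemma expand_mult_eo (v a : ℕ) :
    (expand D).mult (2*v) (2*a+1) = if D.IsDupNode v ∧ a = v then 2 else 0 := by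
  have h1 : (2*v) % 2 = 0 := by omega
  have h2 : (2*v) / 2 = v := by omega
  have h3 : ¬ ((2*a+1) % 2 = 0) := by omega
  simp only [expand, h1, h2, if_pos rfl, if_neg h3]
  by_cases hd : D.IsDupNode v
  · simp only [if_pos hd]
    by_cases hav : a = v
    · subst hav; simp [hd]
    · have : ¬ (2*a+1 = 2*v+1) := by omega
      simp [this, hav, hd]
  · simp [hd]

lemma expand_mult_oe (a w : ℕ) :
    (expand D).mult (2*a+1) (2*w) = if D.IsDupNode a then D.mult a w else 0 := by
  have h1 : ¬ ((2*a+1) % 2 = 0) := by omega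
  have h2 : (2*a+1) / 2 = a := by omega
  have h3 : (2*w) % 2 = 0 := by omega
  have h4 : (2*w) / 2 = w := by omega
  simp only [expand, if_neg h1, h2, h3, h4]
  split_ifs <;> rfl

lemma expand_mult_oo (a b : ℕ) : (expand D).mult (2*a+1) (2*b+1) = 0 := by
  have h1 : ¬ ((2*a+1) % 2 = 0) := by omega
  have h3 : ¬ ((2*b+1) % 2 = 0) := by omega
  by_cases hd : D.IsDupNode ((2*a+1)/2)
  · simp [expand, if_neg h1, hd, h3]
  · simp [expand, if_neg h1, hd]

lemma expand_label_even (v : ℕ) : (expand D).label (2*v) = D.label v := by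
  have h1 : (2*v) % 2 = 0 := by omega
  have h2 : (2*v) / 2 = v := by omega
  simp [expand, h1, h2]

lemma expand_label_odd (v : ℕ) : (expand D).label (2*v+1) = none := by
  have h1 : ¬ ((2*v+1) % 2 = 0) := by omega
  simp [expand, h1]

lemma expand_sum (f : ℕ → ℕ) :
    ∑ t ∈ (expand D).verts, f t =
      (∑ w ∈ D.verts, f (2*w)) +
      ∑ a ∈ D.verts.filter (fun v => D.inDeg v = 1 ∧ D.outDeg v = 1), f (2*a+1) := by
  have hdisj : Disjoint (D.verts.image (fun v => 2*v))
      ((D.verts.filter (fun v => D.inDeg v = 1 ∧ D.outDeg v = 1)).image (fun v => 2*v+1)) := by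
    rw [Finset.disjoint_left]
    rintro x hx hy
    simp only [Finset.mem_image] at hx hy
    obtain ⟨v, -, rfl⟩ := hx
    obtain ⟨u, -, h⟩ := hy
    omega
  calc ∑ t ∈ (expand D).verts, f t
      = ∑ t ∈ (D.verts.image (fun v => 2*v) ∪
          (D.verts.filter (fun v => D.inDeg v = 1 ∧ D.outDeg v = 1)).image (fun v => 2*v+1)),
          f t := rfl
    _ = _ := by
        rw [Finset.sum_union hdisj,
          Finset.sum_image (fun a _ b _ h => by omega),
          Finset.sum_image (fun a _ b _ h => by omega)]

lemma isDupNode_iff_of_mem {v : ℕ} (hv : v ∈ D.verts) :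
    D.IsDupNode v ↔ (D.inDeg v = 1 ∧ D.outDeg v = 1) := by
  simp [IsDupNode, hv]

lemma expand_outDeg_even_dup {v : ℕ} (hv : D.IsDupNode v) : (expand D).outDeg (2*v) = 2 := by
  rw [outDeg, expand_sum]
  have h1 : ∑ w ∈ D.verts, (expand D).mult (2*v) (2*w) = 0 := by
    apply Finset.sum_eq_zero
    intro w _
    rw [expand_mult_ee, if_pos hv]
  have h2 : ∑ a ∈ D.verts.filter (fun v => D.inDeg v = 1 ∧ D.outDeg v = 1),
      (expand D).mult (2*v) (2*a+1) = 2 := by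
    have : ∀ a ∈ D.verts.filter (fun v => D.inDeg v = 1 ∧ D.outDeg v = 1),
        (expand D).mult (2*v) (2*a+1) = if a = v then 2 else 0 := by
      intro a _
      rw [expand_mult_eo]
      by_cases hav : a = v <;> simp [hav, hv]
    rw [Finset.sum_congr rfl this, Finset.sum_ite_eq' _ v (fun _ => 2), if_pos]
    simp only [Finset.mem_filter]
    exact ⟨hv.1, hv.2.1, hv.2.2⟩
  omega

lemma expand_outDeg_even_nondup {v : ℕ} (hv : ¬ D.IsDupNode v) :
    (expand D).outDeg (2*v) = D.outDeg v := by
  rw [outDeg, expand_sum]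
  have h1 : ∑ w ∈ D.verts, (expand D).mult (2*v) (2*w) = D.outDeg v := by
    apply Finset.sum_congr rfl
    intro w _
    rw [expand_mult_ee, if_neg hv]
  have h2 : ∑ a ∈ D.verts.filter (fun v => D.inDeg v = 1 ∧ D.outDeg v = 1),
      (expand D).mult (2*v) (2*a+1) = 0 := by
    apply Finset.sum_eq_zero
    intro a _
    rw [expand_mult_eo, if_neg (fun h => hv h.1)]
  omega

lemma expand_outDeg_odd {v : ℕ} (hv : D.IsDupNode v) :
    (expand D).outDeg (2*v+1) = D.outDeg v := by
  rw [outDeg, expand_sum]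
  have h1 : ∑ w ∈ D.verts, (expand D).mult (2*v+1) (2*w) = D.outDeg v := by
    apply Finset.sum_congr rfl
    intro w _
    rw [expand_mult_oe, if_pos hv]
  have h2 : ∑ a ∈ D.verts.filter (fun v => D.inDeg v = 1 ∧ D.outDeg v = 1),
      (expand D).mult (2*v+1) (2*a+1) = 0 := by
    apply Finset.sum_eq_zero
    intro a _
    rw [expand_mult_oo]
  omega

lemma expand_inDeg_even (w : ℕ) : (expand D).inDeg (2*w) = D.inDeg w := by
  rw [inDeg, expand_sum (fun s => (expand D).mult s (2*w))]
  have h1 : ∑ u ∈ D.verts, (expand D).mult (2*u) (2*w) =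
      ∑ u ∈ D.verts.filter (fun v => ¬(D.inDeg v = 1 ∧ D.outDeg v = 1)), D.mult u w := by
    rw [Finset.sum_filter]
    apply Finset.sum_congr rfl
    intro u hu
    rw [expand_mult_ee]
    by_cases hd : D.IsDupNode u
    · rw [if_pos hd, if_neg (by simp [(isDupNode_iff_of_mem hu).mp hd])]
    · rw [if_neg hd, if_pos (by rw [isDupNode_iff_of_mem hu] at hd; exact hd)]
  have h2 : ∑ a ∈ D.verts.filter (fun v => D.inDeg v = 1 ∧ D.outDeg v = 1),
      (expand D).mult (2*a+1) (2*w) =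
      ∑ a ∈ D.verts.filter (fun v => D.inDeg v = 1 ∧ D.outDeg v = 1), D.mult a w := by
    apply Finset.sum_congr rfl
    intro a ha
    simp only [Finset.mem_filter] at ha
    rw [expand_mult_oe, if_pos ⟨ha.1, ha.2.1, ha.2.2⟩]
  rw [h1, h2, Nat.add_comm, Finset.sum_filter_add_sum_filter_not]
  rfl

lemma expand_inDeg_odd {v : ℕ} (hv : D.IsDupNode v) : (expand D).inDeg (2*v+1) = 2 := by
  rw [inDeg, expand_sum (fun s => (expand D).mult s (2*v+1))]
  have h1 : ∑ u ∈ D.verts, (expand D).mult (2*u) (2*v+1) = 2 := by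
    have : ∀ u ∈ D.verts, (expand D).mult (2*u) (2*v+1) = if u = v then 2 else 0 := by
      intro u _
      rw [expand_mult_eo]
      by_cases huv : u = v
      · subst huv; simp [hv]
      · simp only [if_neg huv]
        rw [if_neg]
        rintro ⟨-, h⟩
        exact huv (h ▸ rfl)
    rw [Finset.sum_congr rfl this, Finset.sum_ite_eq' _ v (fun _ => 2), if_pos hv.1]
  have h2 : ∑ a ∈ D.verts.filter (fun v => D.inDeg v = 1 ∧ D.outDeg v = 1),
      (expand D).mult (2*a+1) (2*v+1) = 0 := by
    apply Finset.sum_eq_zero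
    intro a _
    rw [expand_mult_oo]
  omega


lemma parity_rep (s : ℕ) : ∃ v, s = 2*v ∨ s = 2*v+1 := ⟨s/2, by omega⟩

section ExpandStruct

variable {X : Finset ℕ} (hD : D.IsDupTree X)
include hD

lemma dupTree_inDeg_le_one : ∀ v ∈ D.verts, D.inDeg v ≤ 1 := by
  intro v hv
  rcases hD.nodes v hv with ⟨-, h1, -⟩ | ⟨-, h1, -⟩ | ⟨-, h1, -⟩ | ⟨-, h1, -⟩ <;> omega

lemma expand_supported : (expand D).Supported := by
  intro s t h
  obtain ⟨v, rfl | rfl⟩ := parity_rep s <;> obtain ⟨w, rfl | rfl⟩ := parity_rep t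
  · rw [Adj, expand_mult_ee] at h
    split_ifs at h with hd
    · omega
    · have := hD.supported v w h
      exact ⟨expand_mem_even this.1, expand_mem_even this.2⟩
  · rw [Adj, expand_mult_eo] at h
    split_ifs at h with hd
    · obtain ⟨hd1, rfl⟩ := hd
      exact ⟨expand_mem_even hd1.1, expand_mem_odd hd1⟩
    · omega
  · rw [Adj, expand_mult_oe] at h
    split_ifs at h with hd
    · have := hD.supported v w h
      exact ⟨expand_mem_odd hd, expand_mem_even this.2⟩
    · omega
  · rw [Adj, expand_mult_oo] at h; omega

lemma expand_acyclic : (expand D).Acyclic := by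
  apply acyclic_of_measure (ψ := fun w => 2 * D.rank (w/2) + w % 2)
  intro s t h
  obtain ⟨v, rfl | rfl⟩ := parity_rep s <;> obtain ⟨w, rfl | rfl⟩ := parity_rep t <;>
    simp only [Adj, expand_mult_ee, expand_mult_eo, expand_mult_oe, expand_mult_oo] at h <;>
    [skip; skip; skip; omega]
  · split_ifs at h with hd
    · omega
    · have := rank_lt_of_adj hD.supported hD.acyclic h
      have e1 : 2*v/2 = v := by omega
      have e2 : 2*w/2 = w := by omega
      simp only [e1, e2]
      omega
  · split_ifs at h with hd
    · obtain ⟨-, rfl⟩ := hd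
      have e1 : 2*w/2 = w := by omega
      have e2 : (2*w+1)/2 = w := by omega
      simp only [e1, e2]
      omega
    · omega
  · split_ifs at h with hd
    · have := rank_lt_of_adj hD.supported hD.acyclic h
      have e1 : (2*v+1)/2 = v := by omega
      have e2 : 2*w/2 = w := by omega
      simp only [e1, e2]
      omega
    · omega

lemma expand_isRoot_iff {w : ℕ} : (expand D).IsRoot w ↔ ∃ r, D.IsRoot r ∧ w = 2*r := by
  constructor
  · rintro ⟨hmem, hin, hout⟩
    rcases expand_mem.mp hmem with ⟨v, hv, rfl⟩ | ⟨v, hv, rfl⟩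
    · by_cases hd : D.IsDupNode v
      · rw [expand_outDeg_even_dup hd] at hout; omega
      · rw [expand_inDeg_even] at hin
        rw [expand_outDeg_even_nondup hd] at hout
        exact ⟨v, ⟨hv, hin, hout⟩, rfl⟩
    · rw [expand_inDeg_odd hv] at hin; omega
  · rintro ⟨r, hr, rfl⟩
    have hnd : ¬ D.IsDupNode r := by
      rintro ⟨-, h1, -⟩
      rw [hr.2.1] at h1
      omega
    exact ⟨expand_mem_even hr.1, by rw [expand_inDeg_even, hr.2.1],
      by rw [expand_outDeg_even_nondup hnd, hr.2.2]⟩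

lemma expand_root : ∃! r, (expand D).IsRoot r := by
  obtain ⟨r, hr, hru⟩ := hD.root
  refine ⟨2*r, expand_isRoot_iff hD |>.mpr ⟨r, hr, rfl⟩, ?_⟩
  intro w hw
  obtain ⟨r', hr', rfl⟩ := (expand_isRoot_iff hD).mp hw
  rw [hru r' hr']

lemma expand_nodes : ∀ v ∈ (expand D).verts,
    (expand D).IsRoot v ∨ (expand D).IsTreeNode v ∨ (expand D).IsRetic v ∨
      (expand D).IsLeafNode v := by
  intro w hw
  rcases expand_mem.mp hw with ⟨v, hv, rfl⟩ | ⟨v, hv, rfl⟩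
  · by_cases hd : D.IsDupNode v
    · refine Or.inr (Or.inl ⟨hw, ?_, expand_outDeg_even_dup hd⟩)
      rw [expand_inDeg_even]
      exact hd.2.1
    · rcases hD.nodes v hv with h | h | h | h
      · exact Or.inl ((expand_isRoot_iff hD).mpr ⟨v, h, rfl⟩)
      · exact Or.inr (Or.inl ⟨hw, by rw [expand_inDeg_even]; exact h.2.1,
          by rw [expand_outDeg_even_nondup hd]; exact h.2.2⟩)
      · exact absurd h hd
      · exact Or.inr (Or.inr (Or.inr ⟨hw, by rw [expand_inDeg_even]; exact h.2.1,
          by rw [expand_outDeg_even_nondup hd]; exact h.2.2⟩))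
  · refine Or.inr (Or.inr (Or.inl ⟨hw, expand_inDeg_odd hv, ?_⟩))
    rw [expand_outDeg_odd hv]
    exact hv.2.2

lemma expand_isLeaf_iff {w : ℕ} :
    (expand D).IsLeafNode w ↔ ∃ l, D.IsLeafNode l ∧ w = 2*l := by
  constructor
  · rintro ⟨hmem, hin, hout⟩
    rcases expand_mem.mp hmem with ⟨v, hv, rfl⟩ | ⟨v, hv, rfl⟩
    · by_cases hd : D.IsDupNode v
      · rw [expand_outDeg_even_dup hd] at hout; omega
      · rw [expand_inDeg_even] at hin
        rw [expand_outDeg_even_nondup hd] at hout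
        exact ⟨v, ⟨hv, hin, hout⟩, rfl⟩
    · rw [expand_inDeg_odd hv] at hin; omega
  · rintro ⟨l, hl, rfl⟩
    have hnd : ¬ D.IsDupNode l := by
      rintro ⟨-, -, h2⟩
      rw [hl.2.2] at h2
      omega
    exact ⟨expand_mem_even hl.1, by rw [expand_inDeg_even]; exact hl.2.1,
      by rw [expand_outDeg_even_nondup hnd]; exact hl.2.2⟩

lemma expand_labels : (expand D).LabelsOnLeaves := by
  intro w
  rw [expand_isLeaf_iff hD]
  constructor
  · rintro ⟨x, hx⟩
    obtain ⟨v, rfl | rfl⟩ := parity_rep w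
    · rw [expand_label_even] at hx
      have := (hD.labels v).mp ⟨x, hx⟩
      exact ⟨v, this, rfl⟩
    · rw [expand_label_odd] at hx
      exact absurd hx (by simp)
  · rintro ⟨l, hl, rfl⟩
    rw [expand_label_even]
    exact (hD.labels l).mpr hl

lemma expand_labelsSub : ∀ v x, (expand D).label v = some x → x ∈ X := by
  intro w x hx
  obtain ⟨v, rfl | rfl⟩ := parity_rep w
  · rw [expand_label_even] at hx
    exact hD.labelsSub v x hx
  · rw [expand_label_odd] at hx
    exact absurd hx (by simp)

lemma expand_labelsOnto : ∀ x ∈ X, ∃! v, (expand D).label v = some x := by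
  intro x hx
  obtain ⟨v, hv, hvu⟩ := hD.labelsOnto x hx
  refine ⟨2*v, by show (expand D).label (2*v) = some x; rw [expand_label_even]; exact hv, ?_⟩
  intro w hw
  obtain ⟨u, rfl | rfl⟩ := parity_rep w
  · rw [expand_label_even] at hw
    rw [hvu u hw]
  · rw [expand_label_odd] at hw
    exact absurd hw (by simp)

lemma expand_isNetwork : (expand D).IsNetwork X :=
  ⟨expand_root hD, expand_nodes hD, expand_acyclic hD, expand_supported hD,
    expand_labels hD, expand_labelsSub hD, expand_labelsOnto hD⟩

lemma expand_isBeadedTree : (expand D).IsBeadedTree X := by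
  refine ⟨expand_isNetwork hD, ?_⟩
  intro w hw hin
  rcases expand_mem.mp hw with ⟨v, hv, rfl⟩ | ⟨v, hv, rfl⟩
  · rw [expand_inDeg_even] at hin
    have := dupTree_inDeg_le_one hD v hv
    omega
  · refine ⟨2*v, ?_⟩
    rw [expand_mult_eo]
    simp [hv]

end ExpandStruct



/-! ### Lifting walks into the expansion -/

noncomputable def eLiftArc (D : DG) (j : ℕ) (e : Arc) : List Arc :=
  if D.IsDupNode e.1 then [(2*e.1, 2*e.1+1, j), (2*e.1+1, 2*e.2.1, e.2.2)]
  else [(2*e.1, 2*e.2.1, e.2.2)]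

noncomputable def eLift (D : DG) (p : List Arc) : List Arc := p.flatMap (eLiftArc D 0)

noncomputable def eLiftJ (D : DG) (j : ℕ) : List Arc → List Arc
  | [] => []
  | e :: rest => eLiftArc D j e ++ eLift D rest

lemma eLiftArc_isWalk {j : ℕ} {e : Arc} (hj : j < 2) (hok : D.ArcOK e) :
    (expand D).IsWalk (eLiftArc D j e) (2*e.1) (2*e.2.1) := by
  obtain ⟨a, bb, i⟩ := e
  simp only [ArcOK] at hok
  by_cases hd : D.IsDupNode a
  · simp only [eLiftArc, if_pos hd]
    rw [isWalk_cons]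
    refine ⟨rfl, ?_, Or.inr ?_⟩
    · show j < (expand D).mult (2*a) (2*a+1)
      rw [expand_mult_eo, if_pos ⟨hd, rfl⟩]
      exact hj
    · have := isWalk_singleton (G := expand D) (e := (2*a+1, 2*bb, i)) ?_
      · exact this
      · show i < (expand D).mult (2*a+1) (2*bb)
        rw [expand_mult_oe, if_pos hd]
        exact hok
  · simp only [eLiftArc, if_neg hd]
    have := isWalk_singleton (G := expand D) (e := (2*a, 2*bb, i)) ?_
    · exact this
    · show i < (expand D).mult (2*a) (2*bb)
      rw [expand_mult_ee, if_neg hd]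
      exact hok

lemma eLift_isWalk {p : List Arc} {a b : ℕ} (hp : D.IsWalk p a b) :
    (expand D).IsWalk (eLift D p) (2*a) (2*b) := by
  induction p generalizing a with
  | nil => exact absurd rfl hp.1
  | cons e rest ih =>
    rw [isWalk_cons] at hp
    obtain ⟨rfl, hok, hrest⟩ := hp
    rw [eLift, List.flatMap_cons]
    rcases hrest with ⟨rfl, rfl⟩ | hw
    · simpa [eLift] using eLiftArc_isWalk (by omega) hok
    · exact (eLiftArc_isWalk (by omega) hok).append (ih hw)

lemma eLiftJ_isWalk {j : ℕ} {p : List Arc} {a b : ℕ} (hj : j < 2) (hp : D.IsWalk p a b) :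
    (expand D).IsWalk (eLiftJ D j p) (2*a) (2*b) := by
  cases p with
  | nil => exact absurd rfl hp.1
  | cons e rest =>
    rw [isWalk_cons] at hp
    obtain ⟨rfl, hok, hrest⟩ := hp
    rw [eLiftJ]
    rcases hrest with ⟨rfl, rfl⟩ | hw
    · simpa [eLift] using eLiftArc_isWalk hj hok
    · exact (eLiftArc_isWalk hj hok).append (eLift_isWalk hw)

lemma eLiftJ_head {j : ℕ} {e : Arc} {rest : List Arc} :
    (eLiftJ D j (e :: rest)).head? =
      some (if D.IsDupNode e.1 then (2*e.1, 2*e.1+1, j) else (2*e.1, 2*e.2.1, e.2.2)) := by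
  by_cases hd : D.IsDupNode e.1 <;> simp [eLiftJ, eLiftArc, hd]

lemma isWalk_tail_reaches {p : List Arc} {e : Arc} {a b : ℕ}
    (hp : G.IsWalk (e :: p) a b) : G.Reaches e.2.1 b := by
  rw [isWalk_cons] at hp
  rcases hp.2.2 with ⟨rfl, rfl⟩ | hw
  · exact Relation.ReflTransGen.refl
  · exact hw.reaches

/-- If a node has two distinct out-neighbours, it has out-degree at least 2. -/
lemma two_le_outDeg_of_children (hs : G.Supported) {y y' : ℕ}
    (h1 : G.Adj a y) (h2 : G.Adj a y') (hne : y ≠ y') : 2 ≤ G.outDeg a :=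
  two_le_outDeg hs (c1 := y) (c2 := y') (i1 := 0) (i2 := 0) h1 h2
    (fun h => hne (congrArg Prod.fst h))

/-- In a MUL-tree, the children of a node with two distinct children are exactly those two. -/
lemma mulTree_children {X : Finset ℕ} {T : DG} (hT : T.IsMulTree X) {x y y' w : ℕ}
    (h1 : T.Adj x y) (h2 : T.Adj x y') (hne : y ≠ y') (hw : T.Adj x w) :
    w = y ∨ w = y' := by
  have hx : x ∈ T.verts := (hT.supported x y h1).1
  have h2le : 2 ≤ T.outDeg x := two_le_outDeg_of_children hT.supported h1 h2 hne
  have hout : T.outDeg x = 2 := by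
    rcases hT.nodes x hx with ⟨-, -, h⟩ | ⟨-, -, h⟩ | ⟨-, -, h⟩ <;> omega
  exact adj_mem_pair hT.supported hout h1 h2 hne hw

/-- Nodes of a MUL-tree which are not leaves have a child. -/
lemma mulTree_child {X : Finset ℕ} {T : DG} (hT : T.IsMulTree X) {x : ℕ}
    (hx : x ∈ T.verts) (hnl : ¬ T.IsLeafNode x) : ∃ y, T.Adj x y := by
  have : T.outDeg x ≠ 0 := by
    rcases hT.nodes x hx with ⟨-, -, h⟩ | ⟨-, -, h⟩ | h
    · omega
    · omega
    · exact absurd h hnl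
  obtain ⟨y, -, hy⟩ := exists_adj_child this
  exact ⟨y, hy⟩

lemma expand_displays {X : Finset ℕ} {T : DG} (hD : D.IsDupTree X) (hT : T.IsMulTree X)
    (hC : D.ConsistentWith T) : (expand D).Displays T := by
  obtain ⟨M, hM1, hM2, hM3⟩ := hC
  classical
  -- the vertex map
  refine ⟨fun v => 2 * M v,
    fun u v => if h : D.SReaches (M u) (M v)
      then eLiftJ D (if ∃ w, T.Adj u w ∧ w < v then 1 else 0) (exists_walk h).choose
      else [], ?_, ?_, ?_, ?_⟩
  · -- vertices are mapped into the network
    intro v hv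
    by_cases hl : T.IsLeafNode v
    · exact expand_mem_even (hM1 v hl).1.1
    · obtain ⟨y, hy⟩ := mulTree_child hT hv hl
      have hsr := hM2 v y hy
      obtain ⟨c, hc, -⟩ := (Relation.TransGen.head'_iff).mp hsr
      exact expand_mem_even (hD.supported _ _ hc).1
  · -- leaves are mapped to leaves
    intro v hv
    refine ⟨(expand_isLeaf_iff hD).mpr ⟨M v, (hM1 v hv).1, rfl⟩, ?_⟩
    rw [expand_label_even]
    exact (hM1 v hv).2
  · -- edges are mapped to walks
    intro u v huv
    have hsr := hM2 u v huv
    dsimp only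
    rw [dif_pos hsr]
    exact eLiftJ_isWalk (by split_ifs <;> omega) (exists_walk hsr).choose_spec
  · -- divergence at internal nodes
    intro x y y' h1 h2 hne
    have hsr1 := hM2 x y h1
    have hsr2 := hM2 x y' h2
    dsimp only
    rw [dif_pos hsr1, dif_pos hsr2]
    have hw1 := (exists_walk hsr1).choose_spec
    have hw2 := (exists_walk hsr2).choose_spec
    obtain ⟨e1, p1, hp1⟩ : ∃ e p, (exists_walk hsr1).choose = e :: p := by
      rcases hq : (exists_walk hsr1).choose with _ | ⟨e, p⟩
      · rw [hq] at hw1; exact absurd rfl hw1.1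
      · exact ⟨e, p, rfl⟩
    obtain ⟨e2, p2, hp2⟩ : ∃ e p, (exists_walk hsr2).choose = e :: p := by
      rcases hq : (exists_walk hsr2).choose with _ | ⟨e, p⟩
      · rw [hq] at hw2; exact absurd rfl hw2.1
      · exact ⟨e, p, rfl⟩
    rw [hp1] at hw1
    rw [hp2] at hw2
    have he1 : M x = e1.1 := ((isWalk_cons).mp hw1).1
    have he2 : M x = e2.1 := ((isWalk_cons).mp hw2).1
    rw [hp1, hp2, eLiftJ_head, eLiftJ_head, ← he1, ← he2]
    by_cases hd : D.IsDupNode (M x)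
    · rw [if_pos hd, if_pos hd]
      -- the copy indices differ
      have hchild : ∀ w, T.Adj x w → w = y ∨ w = y' := fun w => mulTree_children hT h1 h2 hne
      have hidx : (if ∃ w, T.Adj x w ∧ w < y then 1 else 0) ≠
          (if ∃ w, T.Adj x w ∧ w < y' then 1 else 0) := by
        rcases Nat.lt_trichotomy y y' with hlt | heq | hlt
        · rw [if_neg, if_pos ⟨y, h1, hlt⟩]
          · omega
          · rintro ⟨w, hw, hwlt⟩
            rcases hchild w hw with rfl | rfl <;> omega
        · exact absurd heq hne
        · rw [if_pos ⟨y', h2, hlt⟩, if_neg]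
          · omega
          · rintro ⟨w, hw, hwlt⟩
            rcases hchild w hw with rfl | rfl <;> omega
      intro hcon
      rw [Option.some_inj] at hcon
      exact hidx (congrArg (fun q : Arc => q.2.2) hcon)
    · rw [if_neg hd, if_neg hd]
      -- first arcs of the chosen walks go to distinct children
      have hlca : D.IsLCA (M x) (M y) (M y') := (hM3 x y y' h1 h2 hne).resolve_right hd
      have hne2 : e1.2.1 ≠ e2.2.1 := by
        intro hcc
        have hok1 : D.ArcOK e1 := ((isWalk_cons).mp hw1).2.1
        have hadj : D.Adj (M x) e1.2.1 := he1 ▸ adj_of_mult_pos hok1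
        have hr1 : D.Reaches e1.2.1 (M y) := isWalk_tail_reaches hw1
        have hr2 : D.Reaches e1.2.1 (M y') := hcc ▸ isWalk_tail_reaches hw2
        exact hlca.2.2 e1.2.1 (Relation.TransGen.single hadj) ⟨hr1, hr2⟩
      intro hcon
      rw [Option.some_inj] at hcon
      have := congrArg (fun q : Arc => q.2.1) hcon
      simp only at this
      omega


/-! ### Projecting walks of the expansion back down -/

def eProj (p : List Arc) : List Arc :=
  p.flatMap (fun e => if e.1 % 2 = 0 ∧ e.2.1 = e.1 + 1 then [] else [(e.1/2, e.2.1/2, e.2.2)])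

section ExpandDepth

variable {X : Finset ℕ} (hD : D.IsDupTree X)
include hD

/-- In a walk of the expansion, a non-bead arc projects to a valid arc of `D`. -/
lemma expand_arc_analysis {e : Arc} (hok : (expand D).ArcOK e)
    (hk : ¬ (e.1 % 2 = 0 ∧ e.2.1 = e.1 + 1)) :
    D.ArcOK (e.1/2, e.2.1/2, e.2.2) ∧ e.2.1 % 2 = 0 := by
  obtain ⟨s0, t, i⟩ := e
  simp only [ArcOK] at hok ⊢
  simp only at hk
  obtain ⟨v, rfl | rfl⟩ := parity_rep s0 <;> obtain ⟨w, rfl | rfl⟩ := parity_rep t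
  · rw [expand_mult_ee] at hok
    split_ifs at hok with hd
    · omega
    · have h1 : 2*v/2 = v := by omega
      have h2 : 2*w/2 = w := by omega
      rw [h1, h2]
      exact ⟨hok, by omega⟩
  · rw [expand_mult_eo] at hok
    split_ifs at hok with hd
    · obtain ⟨-, rfl⟩ := hd
      exact absurd ⟨by omega, rfl⟩ hk
    · omega
  · rw [expand_mult_oe] at hok
    split_ifs at hok with hd
    · have h1 : (2*v+1)/2 = v := by omega
      have h2 : 2*w/2 = w := by omega
      rw [h1, h2]
      exact ⟨hok, by omega⟩
    · omega
  · rw [expand_mult_oo] at hok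
    omega

lemma eProj_isWalk : ∀ {p : List Arc} {s b : ℕ}, (expand D).IsWalk p s (2*b) →
    D.IsWalk (eProj p) (s/2) b := by
  intro p
  induction p with
  | nil => intro s b hp; exact absurd rfl hp.1
  | cons e rest ih =>
    intro s b hp
    rw [isWalk_cons] at hp
    obtain ⟨rfl, hok, hrest⟩ := hp
    by_cases hk : e.1 % 2 = 0 ∧ e.2.1 = e.1 + 1
    · have heq : eProj (e :: rest) = eProj rest := by
        simp [eProj, List.flatMap_cons, hk]
      rcases hrest with ⟨-, hb⟩ | hw
      · omega
      · have hih := ih hw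
        have h12 : e.2.1 / 2 = e.1 / 2 := by omega
        rw [h12] at hih
        rw [heq]
        exact hih
    · obtain ⟨hok2, hteven⟩ := expand_arc_analysis hD hok hk
      have heq : eProj (e :: rest) = (e.1/2, e.2.1/2, e.2.2) :: eProj rest := by
        simp [eProj, List.flatMap_cons, hk]
      rw [heq, isWalk_cons]
      rcases hrest with ⟨hre, hb⟩ | hw
      · refine ⟨rfl, hok2, Or.inl ⟨by simp [eProj, hre], ?_⟩⟩
        show b = e.2.1 / 2
        omega
      · exact ⟨rfl, hok2, Or.inr (ih hw)⟩

lemma expand_beads_eq_skip : ∀ {p : List Arc} {s b : ℕ}, (expand D).IsWalk p s b →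
    (expand D).beadsOnWalk p = p.countP (fun e => decide (e.1 % 2 = 0 ∧ e.2.1 = e.1 + 1)) := by
  intro p
  induction p with
  | nil => intro s b hp; exact absurd rfl hp.1
  | cons e rest ih =>
    intro s b hp
    rw [isWalk_cons] at hp
    obtain ⟨rfl, hok, hrest⟩ := hp
    have harc : ((expand D).mult e.1 e.2.1 = 2) ↔ (e.1 % 2 = 0 ∧ e.2.1 = e.1 + 1) := by
      obtain ⟨s0, t, i⟩ := e
      simp only [ArcOK] at hok
      show ((expand D).mult s0 t = 2) ↔ (s0 % 2 = 0 ∧ t = s0 + 1)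
      obtain ⟨v, rfl | rfl⟩ := parity_rep s0 <;> obtain ⟨w, rfl | rfl⟩ := parity_rep t
      · rw [expand_mult_ee] at hok ⊢
        have := hD.simple v w
        split_ifs at hok ⊢ with hd <;> omega
      · rw [expand_mult_eo] at hok ⊢
        split_ifs at hok ⊢ with hd
        · obtain ⟨-, rfl⟩ := hd
          constructor
          · intro; exact ⟨by omega, rfl⟩
          · intro; rfl
        · omega
      · rw [expand_mult_oe] at hok ⊢
        have := hD.simple v w
        split_ifs at hok ⊢ with hd <;> omega
      · rw [expand_mult_oo] at hok
        omega
    have htail : (expand D).beadsOnWalk rest =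
        rest.countP (fun e => decide (e.1 % 2 = 0 ∧ e.2.1 = e.1 + 1)) := by
      rcases hrest with ⟨rfl, -⟩ | hw
      · simp [beadsOnWalk]
      · exact ih hw
    simp only [beadsOnWalk, List.countP_cons, decide_eq_true_eq] at htail ⊢
    rw [htail]
    congr 1
    simp [harc]

lemma expand_skip_le_oddsrc : ∀ {p : List Arc} {s b : ℕ}, (expand D).IsWalk p s b →
    b % 2 = 0 →
    p.countP (fun e => decide (e.1 % 2 = 0 ∧ e.2.1 = e.1 + 1)) + s % 2 ≤
      p.countP (fun e => decide (e.1 % 2 = 1)) := by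
  intro p
  induction p with
  | nil => intro s b hp; exact absurd rfl hp.1
  | cons e rest ih =>
    intro s b hp hb
    rw [isWalk_cons] at hp
    obtain ⟨rfl, hok, hrest⟩ := hp
    simp only [List.countP_cons, decide_eq_true_eq]
    rcases hrest with ⟨rfl, rfl⟩ | hw
    · simp only [List.countP_nil]
      split_ifs <;> omega
    · have ihh := ih hw hb
      split_ifs <;> omega

lemma expand_dups_eProj : ∀ {p : List Arc} {s b : ℕ}, (expand D).IsWalk p s b →
    D.dupsOnWalk (eProj p) = p.countP (fun e => decide (e.1 % 2 = 1)) := by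
  intro p
  induction p with
  | nil => intro s b hp; exact absurd rfl hp.1
  | cons e rest ih =>
    intro s b hp
    rw [isWalk_cons] at hp
    obtain ⟨rfl, hok, hrest⟩ := hp
    have htail : D.dupsOnWalk (eProj rest) =
        rest.countP (fun e => decide (e.1 % 2 = 1)) := by
      rcases hrest with ⟨rfl, -⟩ | hw
      · simp [dupsOnWalk, eProj]
      · exact ih hw
    have hsplit : eProj (e :: rest) =
        (if e.1 % 2 = 0 ∧ e.2.1 = e.1 + 1 then [] else [(e.1/2, e.2.1/2, e.2.2)]) ++
          eProj rest := by
      simp [eProj, List.flatMap_cons]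
    have hhead : (List.countP (fun f => decide (D.inDeg f.1 = 1 ∧ D.outDeg f.1 = 1))
        (if e.1 % 2 = 0 ∧ e.2.1 = e.1 + 1 then [] else [(e.1/2, e.2.1/2, e.2.2)])) =
        (if e.1 % 2 = 1 then 1 else 0) := by
      by_cases hk : e.1 % 2 = 0 ∧ e.2.1 = e.1 + 1
      · rw [if_pos hk, List.countP_nil, if_neg (by omega)]
      · rw [if_neg hk]
        have hcorr : (D.inDeg (e.1/2) = 1 ∧ D.outDeg (e.1/2) = 1) ↔ e.1 % 2 = 1 := by
          obtain ⟨s0, t, i⟩ := e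
          simp only [ArcOK] at hok
          simp only at hk ⊢
          obtain ⟨v, rfl | rfl⟩ := parity_rep s0
          · have hv2 : 2*v/2 = v := by omega
            rw [hv2]
            have hfalse : ¬ ((2*v) % 2 = 1) := by omega
            obtain ⟨w, rfl | rfl⟩ := parity_rep t
            · rw [expand_mult_ee] at hok
              split_ifs at hok with hd
              · exact absurd hok (by omega)
              · constructor
                · intro hdeg
                  exact absurd ⟨(hD.supported v w (adj_of_mult_pos hok)).1, hdeg⟩ hd
                · intro h
                  exact absurd h hfalse
            · rw [expand_mult_eo] at hok
              split_ifs at hok with hd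
              · obtain ⟨-, rfl⟩ := hd
                exact absurd ⟨by omega, rfl⟩ hk
              · exact absurd hok (by omega)
          · have hv2 : (2*v+1)/2 = v := by omega
            rw [hv2]
            obtain ⟨w, rfl | rfl⟩ := parity_rep t
            · rw [expand_mult_oe] at hok
              split_ifs at hok with hd
              · constructor
                · intro; omega
                · intro; exact ⟨hd.2.1, hd.2.2⟩
              · exact absurd hok (by omega)
            · rw [expand_mult_oo] at hok
              exact absurd hok (by omega)
        have : (List.countP (fun f => decide (D.inDeg f.1 = 1 ∧ D.outDeg f.1 = 1))
            [((e.1/2 : ℕ), e.2.1/2, e.2.2)]) =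
            (if D.inDeg (e.1/2) = 1 ∧ D.outDeg (e.1/2) = 1 then 1 else 0) := by
          simp [List.countP_cons]
        rw [this]
        split_ifs with h1 h2 h2
        · rfl
        · exact absurd (hcorr.mp h1) h2
        · exact absurd (hcorr.mpr h2) h1
        · rfl
    rw [dupsOnWalk, hsplit, List.countP_append]
    rw [dupsOnWalk] at htail
    rw [htail, hhead, List.countP_cons]
    simp only [decide_eq_true_eq]
    split_ifs <;> omega

lemma expand_beads_append {p q : List Arc} :
    (expand D).beadsOnWalk (p ++ q) = (expand D).beadsOnWalk p + (expand D).beadsOnWalk q := by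
  simp [beadsOnWalk, List.countP_append]

lemma expand_depth {d : ℕ}
    (hbound : ∀ (p : List Arc) (r l : ℕ), D.IsRoot r → D.IsLeafNode l → D.IsWalk p r l →
      D.dupsOnWalk p ≤ d) :
    ∀ (p : List Arc) (a b : ℕ), (expand D).IsWalk p a b → (expand D).beadsOnWalk p ≤ d := by
  intro p a b hp
  have hsE := expand_supported hD
  have haE := expand_acyclic hD
  have ha := hp.start_mem hsE
  have hb := hp.end_mem hsE
  obtain ⟨ρ, hρv, hρ0, hρw⟩ := exists_walk_from_source hsE haE ha
  obtain ⟨lam, hlv, hl0, hlw⟩ := exists_walk_to_sink hsE haE hb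
  obtain ⟨Q, hQ, hle⟩ : ∃ Q, (expand D).IsWalk Q ρ lam ∧
      (expand D).beadsOnWalk p ≤ (expand D).beadsOnWalk Q := by
    rcases hρw with rfl | ⟨q1, hq1⟩ <;> rcases hlw with rfl | ⟨q2, hq2⟩
    · exact ⟨p, hp, le_rfl⟩
    · exact ⟨p ++ q2, hp.append hq2, by rw [expand_beads_append hD]; omega⟩
    · exact ⟨q1 ++ p, hq1.append hp, by rw [expand_beads_append hD]; omega⟩
    · refine ⟨q1 ++ (p ++ q2), hq1.append (hp.append hq2), ?_⟩
      rw [expand_beads_append hD, expand_beads_append hD]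
      omega
  have hroot : (expand D).IsRoot ρ := by
    rcases expand_nodes hD ρ hρv with h | ⟨-, h1, -⟩ | ⟨-, h1, -⟩ | ⟨-, h1, -⟩
    · exact h
    all_goals omega
  have hleaf : (expand D).IsLeafNode lam := by
    rcases expand_nodes hD lam hlv with ⟨-, -, h1⟩ | ⟨-, -, h1⟩ | ⟨-, -, h1⟩ | h
    · omega
    · omega
    · omega
    · exact h
  obtain ⟨r, hr, rfl⟩ := (expand_isRoot_iff hD).mp hroot
  obtain ⟨l, hl, rfl⟩ := (expand_isLeaf_iff hD).mp hleaf
  have hPW : D.IsWalk (eProj Q) (2*r/2) l := eProj_isWalk hD hQ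
  have hr2 : 2*r/2 = r := by omega
  rw [hr2] at hPW
  have hbd := hbound (eProj Q) r l hr hl hPW
  have hcount := expand_skip_le_oddsrc hD hQ (by omega)
  have hbeads := expand_beads_eq_skip hD hQ
  have hdups := expand_dups_eProj hD hQ
  have hreven : (2*r) % 2 = 0 := by omega
  omega

end ExpandDepth


/-! ### Contraction of a beaded tree to a duplication tree -/

def IsTop (B : DG) (u : ℕ) : Prop := ∃ v, B.mult u v = 2
def IsBot (B : DG) (v : ℕ) : Prop := ∃ u, B.mult u v = 2

noncomputable def topOf (B : DG) (v : ℕ) : ℕ := if h : B.IsBot v then h.choose else v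
noncomputable def botOf (B : DG) (u : ℕ) : ℕ := if h : B.IsTop u then h.choose else u

noncomputable def contract (B : DG) : DG where
  verts := B.verts.filter (fun v => ¬ B.IsTop v)
  mult := fun a b => if B.IsTop a ∨ B.IsTop b then 0 else B.mult a (B.topOf b)
  label := fun v => if B.IsTop v then none else B.label v

section Contract

variable {B : DG} {X : Finset ℕ} (hB : B.IsBeadedTree X)
include hB

lemma bot_retic (h : B.IsBot v) : B.IsRetic v := by
  obtain ⟨u, hu⟩ := h
  have hadj : B.Adj u v := by rw [Adj, hu]; omega
  have hmem := hB.1.supported u v hadj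
  have h2 : 2 ≤ B.inDeg v := hu ▸ mult_le_inDeg hmem.1
  rcases hB.1.nodes v hmem.2 with ⟨-, h0, -⟩ | ⟨-, h0, -⟩ | hr | ⟨-, h0, -⟩
  · omega
  · omega
  · exact hr
  · omega

lemma top_tree (h : B.IsTop u) : B.IsTreeNode u := by
  obtain ⟨v, hv⟩ := h
  have hadj : B.Adj u v := by rw [Adj, hv]; omega
  have hmem := hB.1.supported u v hadj
  have h2 : 2 ≤ B.outDeg u := hv ▸ mult_le_outDeg hmem.2
  rcases hB.1.nodes u hmem.1 with ⟨-, -, h0⟩ | ht | ⟨-, -, h0⟩ | ⟨-, -, h0⟩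
  · omega
  · exact ht
  · omega
  · omega

lemma not_top_bot (ht : B.IsTop v) (hb : B.IsBot v) : False := by
  have h1 := (top_tree hB ht).2.2
  have h2 := (bot_retic hB hb).2.2
  omega

lemma top_unique {u u' : ℕ} (h1 : B.mult u v = 2) (h2 : B.mult u' v = 2) : u = u' := by
  by_contra hne
  have hadj1 : B.Adj u v := by rw [Adj, h1]; omega
  have hadj2 : B.Adj u' v := by rw [Adj, h2]; omega
  have hin := (bot_retic hB ⟨u, h1⟩).2.1
  have hsub : {u, u'} ⊆ B.verts := by
    intro x hx
    rcases Finset.mem_insert.mp hx with rfl | hx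
    · exact (hB.1.supported x v hadj1).1
    · rcases Finset.mem_singleton.mp hx with rfl
      exact (hB.1.supported x v hadj2).1
  have : 4 ≤ B.inDeg v := by
    calc 4 = B.mult u v + B.mult u' v := by omega
    _ = ∑ x ∈ {u, u'}, B.mult x v := by rw [Finset.sum_pair hne]
    _ ≤ B.inDeg v := Finset.sum_le_sum_of_subset hsub
  omega

lemma bot_unique {v v' : ℕ} (h1 : B.mult u v = 2) (h2 : B.mult u v' = 2) : v = v' := by
  by_contra hne
  have hadj1 : B.Adj u v := by rw [Adj, h1]; omega
  have hadj2 : B.Adj u v' := by rw [Adj, h2]; omega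
  have hout := (top_tree hB ⟨v, h1⟩).2.2
  have hsub : {v, v'} ⊆ B.verts := by
    intro x hx
    rcases Finset.mem_insert.mp hx with rfl | hx
    · exact (hB.1.supported u x hadj1).2
    · rcases Finset.mem_singleton.mp hx with rfl
      exact (hB.1.supported u x hadj2).2
  have : 4 ≤ B.outDeg u := by
    calc 4 = B.mult u v + B.mult u v' := by omega
    _ = ∑ x ∈ {v, v'}, B.mult u x := by rw [Finset.sum_pair hne]
    _ ≤ B.outDeg u := Finset.sum_le_sum_of_subset hsub
  omega

omit hB in
lemma topOf_mult (h : B.IsBot v) : B.mult (B.topOf v) v = 2 := by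
  rw [topOf, dif_pos h]
  exact h.choose_spec

omit hB in
lemma topOf_eq_self (h : ¬ B.IsBot v) : B.topOf v = v := by rw [topOf, dif_neg h]

omit hB in
lemma botOf_mult (h : B.IsTop u) : B.mult u (B.botOf u) = 2 := by
  rw [botOf, dif_pos h]
  exact h.choose_spec

omit hB in
lemma botOf_eq_self (h : ¬ B.IsTop u) : B.botOf u = u := by rw [botOf, dif_neg h]

lemma topOf_eq (h : B.mult u v = 2) : B.topOf v = u :=
  top_unique hB (topOf_mult ⟨u, h⟩) h

lemma botOf_eq (h : B.mult u v = 2) : B.botOf u = v :=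
  bot_unique hB (botOf_mult ⟨v, h⟩) h

omit hB in
lemma topOf_isTop (h : B.IsBot v) : B.IsTop (B.topOf v) := ⟨v, topOf_mult h⟩

omit hB in
lemma botOf_isBot (h : B.IsTop u) : B.IsBot (B.botOf u) := ⟨u, botOf_mult h⟩

lemma bot_in_unique (hb : B.IsBot v) (ha : B.Adj a v) : a = B.topOf v := by
  by_contra hne
  have hin := (bot_retic hB hb).2.1
  have htm := topOf_mult hb
  have hsub : {B.topOf v, a} ⊆ B.verts := by
    intro x hx
    simp only [Finset.mem_insert, Finset.mem_singleton] at hx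
    have hx1 : B.Adj x v := by
      rcases hx with rfl | rfl
      · rw [Adj, htm]; omega
      · exact ha
    exact (hB.1.supported x v hx1).1
  have : 3 ≤ B.inDeg v := by
    calc 3 ≤ B.mult (B.topOf v) v + B.mult a v := by rw [Adj] at ha; omega
    _ = ∑ x ∈ {B.topOf v, a}, B.mult x v := by rw [Finset.sum_pair (Ne.symm hne)]
    _ ≤ B.inDeg v := Finset.sum_le_sum_of_subset hsub
  omega

lemma top_out_unique (ht : B.IsTop u) (ha : B.Adj u b) : b = B.botOf u := by
  by_contra hne
  have hout := (top_tree hB ht).2.2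
  have hbm := botOf_mult ht
  have hsub : {B.botOf u, b} ⊆ B.verts := by
    intro x hx
    simp only [Finset.mem_insert, Finset.mem_singleton] at hx
    have hx1 : B.Adj u x := by
      rcases hx with rfl | rfl
      · rw [Adj, hbm]; omega
      · exact ha
    exact (hB.1.supported u x hx1).2
  have : 3 ≤ B.outDeg u := by
    calc 3 ≤ B.mult u (B.botOf u) + B.mult u b := by rw [Adj] at ha; omega
    _ = ∑ x ∈ {B.botOf u, b}, B.mult u x := by rw [Finset.sum_pair (Ne.symm hne)]
    _ ≤ B.outDeg u := Finset.sum_le_sum_of_subset hsub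
  omega

lemma net_mult_bot {a b : ℕ} (h : 2 ≤ B.mult a b) : B.mult a b = 2 ∧ B.IsBot b := by
  have hadj : B.Adj a b := by rw [Adj]; omega
  have hmem := hB.1.supported a b hadj
  have hle : B.mult a b ≤ B.inDeg b := mult_le_inDeg hmem.1
  have hin : B.inDeg b ≤ 2 := by
    rcases hB.1.nodes b hmem.2 with ⟨-, h0, -⟩ | ⟨-, h0, -⟩ | ⟨-, h0, -⟩ | ⟨-, h0, -⟩ <;> omega
  have : B.mult a b = 2 := by omega
  exact ⟨this, ⟨a, this⟩⟩

lemma contract_inDeg (hb : ¬ B.IsTop b) :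
    (contract B).inDeg b = B.inDeg (B.topOf b) := by
  have step1 : (contract B).inDeg b =
      ∑ a ∈ B.verts.filter (fun v => ¬ B.IsTop v), B.mult a (B.topOf b) := by
    apply Finset.sum_congr rfl
    intro a ha
    have ha' : a ∈ B.verts.filter (fun v => ¬ B.IsTop v) := ha
    simp only [Finset.mem_filter] at ha'
    show (if B.IsTop a ∨ B.IsTop b then 0 else B.mult a (B.topOf b)) = _
    rw [if_neg (by tauto)]
  have step2 : ∑ a ∈ B.verts.filter (fun v => B.IsTop v), B.mult a (B.topOf b) = 0 := by
    apply Finset.sum_eq_zero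
    intro a ha
    simp only [Finset.mem_filter] at ha
    by_contra h
    have hadj : B.Adj a (B.topOf b) := by rw [Adj]; omega
    have heq := top_out_unique hB ha.2 hadj
    by_cases bbot : B.IsBot b
    · exact not_top_bot hB (topOf_isTop bbot) (heq ▸ botOf_isBot ha.2)
    · rw [topOf_eq_self bbot] at heq
      exact bbot (heq ▸ botOf_isBot ha.2)
  have htot := Finset.sum_filter_add_sum_filter_not B.verts (fun v => B.IsTop v)
    (fun a => B.mult a (B.topOf b))
  rw [step2] at htot
  rw [step1]
  show _ = ∑ a ∈ B.verts, B.mult a (B.topOf b)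
  omega

lemma contract_injOn_topOf :
    ∀ t1 ∈ B.verts.filter (fun v => ¬ B.IsTop v), ∀ t2 ∈ B.verts.filter (fun v => ¬ B.IsTop v),
      B.topOf t1 = B.topOf t2 → t1 = t2 := by
  intro t1 ht1 t2 ht2 heq
  simp only [Finset.mem_filter] at ht1 ht2
  by_cases hb1 : B.IsBot t1 <;> by_cases hb2 : B.IsBot t2
  · have h1 := topOf_mult hb1
    have h2 := topOf_mult hb2
    rw [heq] at h1
    exact bot_unique hB h1 h2
  · rw [topOf_eq_self hb2] at heq
    exact absurd (by rw [← heq]; exact topOf_isTop hb1) ht2.2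
  · rw [topOf_eq_self hb1] at heq
    exact absurd (by rw [heq]; exact topOf_isTop hb2) ht1.2
  · rw [topOf_eq_self hb1, topOf_eq_self hb2] at heq
    exact heq

lemma contract_image_topOf :
    (B.verts.filter (fun v => ¬ B.IsTop v)).image (B.topOf) =
      B.verts.filter (fun v => ¬ B.IsBot v) := by
  ext s
  simp only [Finset.mem_image, Finset.mem_filter]
  constructor
  · rintro ⟨t, ht, rfl⟩
    by_cases hb : B.IsBot t
    · have htop := topOf_isTop hb
      have hadj : B.Adj (B.topOf t) t := by rw [Adj, topOf_mult hb]; omega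
      exact ⟨(hB.1.supported _ _ hadj).1, fun hbb => not_top_bot hB htop hbb⟩
    · rw [topOf_eq_self hb]
      exact ⟨ht.1, hb⟩
  · rintro ⟨hs, hnb⟩
    by_cases ht : B.IsTop s
    · refine ⟨B.botOf s, ⟨?_, fun htt => not_top_bot hB htt (botOf_isBot ht)⟩,
        topOf_eq hB (botOf_mult ht)⟩
      have hadj : B.Adj s (B.botOf s) := by rw [Adj, botOf_mult ht]; omega
      exact (hB.1.supported _ _ hadj).2
    · exact ⟨s, ⟨hs, ht⟩, topOf_eq_self hnb⟩

lemma contract_outDeg (hbv : b ∈ B.verts) (hb : ¬ B.IsTop b) :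
    (contract B).outDeg b = B.outDeg b := by
  have step1 : (contract B).outDeg b =
      ∑ t ∈ B.verts.filter (fun v => ¬ B.IsTop v), B.mult b (B.topOf t) := by
    apply Finset.sum_congr rfl
    intro t ht
    have ht' : t ∈ B.verts.filter (fun v => ¬ B.IsTop v) := ht
    simp only [Finset.mem_filter] at ht'
    show (if B.IsTop b ∨ B.IsTop t then 0 else B.mult b (B.topOf t)) = _
    rw [if_neg (by tauto)]
  rw [step1, ← Finset.sum_image (contract_injOn_topOf hB), contract_image_topOf hB]
  have step2 : ∑ s ∈ B.verts.filter (fun v => B.IsBot v), B.mult b s = 0 := by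
    apply Finset.sum_eq_zero
    intro s hsf
    simp only [Finset.mem_filter] at hsf
    by_contra h
    have hadj : B.Adj b s := by rw [Adj]; omega
    have := bot_in_unique hB hsf.2 hadj
    exact hb (this ▸ topOf_isTop hsf.2)
  have htot := Finset.sum_filter_add_sum_filter_not B.verts (fun v => B.IsBot v)
    (fun s => B.mult b s)
  rw [step2] at htot
  show _ = ∑ s ∈ B.verts, B.mult b s
  omega

end Contract


section Contract2

variable {B : DG} {X : Finset ℕ} (hB : B.IsBeadedTree X)

omit hB in
lemma contract_mem : v ∈ (contract B).verts ↔ v ∈ B.verts ∧ ¬ B.IsTop v := by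
  show v ∈ B.verts.filter (fun v => ¬ B.IsTop v) ↔ _
  simp [Finset.mem_filter]

include hB

lemma top_tree_inDeg (h : B.IsBot v) : B.inDeg (B.topOf v) = 1 :=
  (top_tree hB (topOf_isTop h)).2.1

lemma contract_inDeg_bot (h : B.IsBot v) : (contract B).inDeg v = 1 := by
  rw [contract_inDeg hB (fun ht => not_top_bot hB ht h), top_tree_inDeg hB h]

lemma contract_inDeg_nonbot (ht : ¬ B.IsTop v) (h : ¬ B.IsBot v) :
    (contract B).inDeg v = B.inDeg v := by
  rw [contract_inDeg hB ht, topOf_eq_self h]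

lemma contract_mult_pos {a b : ℕ} (h : 0 < (contract B).mult a b) :
    ¬ B.IsTop a ∧ ¬ B.IsTop b ∧ B.Adj a (B.topOf b) := by
  have hdef : (contract B).mult a b =
      if B.IsTop a ∨ B.IsTop b then 0 else B.mult a (B.topOf b) := rfl
  rw [hdef] at h
  split_ifs at h with hc
  · omega
  · push_neg at hc
    exact ⟨hc.1, hc.2, h⟩

lemma contract_supported : (contract B).Supported := by
  intro a b h
  obtain ⟨hta, htb, hadj⟩ := contract_mult_pos hB h
  constructor
  · exact contract_mem.mpr ⟨(hB.1.supported _ _ hadj).1, hta⟩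
  · refine contract_mem.mpr ⟨?_, htb⟩
    by_cases hbb : B.IsBot b
    · have : B.Adj (B.topOf b) b := by rw [Adj, topOf_mult hbb]; omega
      exact (hB.1.supported _ _ this).2
    · rw [topOf_eq_self hbb] at hadj
      exact (hB.1.supported _ _ hadj).2

lemma contract_adj_sreaches {a b : ℕ} (h : (contract B).Adj a b) : B.SReaches a b := by
  obtain ⟨hta, htb, hadj⟩ := contract_mult_pos hB h
  by_cases hbb : B.IsBot b
  · have h2 : B.Adj (B.topOf b) b := by rw [Adj, topOf_mult hbb]; omega
    exact Relation.TransGen.tail (Relation.TransGen.single hadj) h2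
  · rw [topOf_eq_self hbb] at hadj
    exact Relation.TransGen.single hadj

omit hB in
lemma transGen_mono {r q : ℕ → ℕ → Prop} (f : ∀ a b, r a b → Relation.TransGen q a b)
    {a b : ℕ} (h : Relation.TransGen r a b) : Relation.TransGen q a b := by
  induction h with
  | single h => exact f _ _ h
  | tail _ h ih => exact ih.trans (f _ _ h)

lemma contract_acyclic : (contract B).Acyclic := by
  intro v hv
  exact hB.1.acyclic v (transGen_mono (fun _ _ h => contract_adj_sreaches hB h) hv)

lemma contract_simple : ∀ a b, (contract B).mult a b ≤ 1 := by
  intro a b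
  by_contra h
  push_neg at h
  obtain ⟨hta, htb, -⟩ := contract_mult_pos hB (a := a) (b := b) (by omega)
  have hdef : (contract B).mult a b =
      if B.IsTop a ∨ B.IsTop b then 0 else B.mult a (B.topOf b) := rfl
  rw [hdef, if_neg (by tauto)] at h
  exact hta ⟨B.topOf b, (net_mult_bot hB (by omega)).1⟩

lemma top_not_root (ht : B.IsTop v) : ¬ B.IsRoot v := by
  intro hr
  have := (top_tree hB ht).2.2
  have := hr.2.2
  omega

lemma bot_not_root (hb : B.IsBot v) : ¬ B.IsRoot v := by
  intro hr
  have := (bot_retic hB hb).2.1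
  have := hr.2.1
  omega

lemma contract_isRoot_iff : (contract B).IsRoot v ↔ B.IsRoot v := by
  constructor
  · rintro ⟨hm, hin, hout⟩
    obtain ⟨hmB, hnt⟩ := contract_mem.mp hm
    by_cases hbb : B.IsBot v
    · rw [contract_inDeg_bot hB hbb] at hin
      omega
    · rw [contract_inDeg_nonbot hB hnt hbb] at hin
      rw [contract_outDeg hB hmB hnt] at hout
      exact ⟨hmB, hin, hout⟩
  · intro hr
    have hnt : ¬ B.IsTop v := fun ht => top_not_root hB ht hr
    have hnb : ¬ B.IsBot v := fun hb => bot_not_root hB hb hr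
    exact ⟨contract_mem.mpr ⟨hr.1, hnt⟩,
      by rw [contract_inDeg_nonbot hB hnt hnb]; exact hr.2.1,
      by rw [contract_outDeg hB hr.1 hnt]; exact hr.2.2⟩

lemma contract_isLeaf_iff : (contract B).IsLeafNode v ↔ B.IsLeafNode v := by
  constructor
  · rintro ⟨hm, hin, hout⟩
    obtain ⟨hmB, hnt⟩ := contract_mem.mp hm
    rw [contract_outDeg hB hmB hnt] at hout
    by_cases hbb : B.IsBot v
    · have := (bot_retic hB hbb).2.2
      omega
    · rw [contract_inDeg_nonbot hB hnt hbb] at hin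
      exact ⟨hmB, hin, hout⟩
  · intro hl
    have hnt : ¬ B.IsTop v := by
      intro ht
      have := (top_tree hB ht).2.2
      have := hl.2.2
      omega
    have hnb : ¬ B.IsBot v := by
      intro hb
      have := (bot_retic hB hb).2.1
      have := hl.2.1
      omega
    exact ⟨contract_mem.mpr ⟨hl.1, hnt⟩,
      by rw [contract_inDeg_nonbot hB hnt hnb]; exact hl.2.1,
      by rw [contract_outDeg hB hl.1 hnt]; exact hl.2.2⟩

lemma contract_isDup_bot (h : B.IsBot v) : (contract B).IsDupNode v := by
  have hnt : ¬ B.IsTop v := fun ht => not_top_bot hB ht h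
  have hmem : v ∈ B.verts := (bot_retic hB h).1
  exact ⟨contract_mem.mpr ⟨hmem, hnt⟩, contract_inDeg_bot hB h,
    by rw [contract_outDeg hB hmem hnt]; exact (bot_retic hB h).2.2⟩

lemma contract_nodes : ∀ v ∈ (contract B).verts,
    (contract B).IsRoot v ∨ (contract B).IsTreeNode v ∨ (contract B).IsDupNode v ∨
      (contract B).IsLeafNode v := by
  intro v hv
  obtain ⟨hmB, hnt⟩ := contract_mem.mp hv
  by_cases hbb : B.IsBot v
  · exact Or.inr (Or.inr (Or.inl (contract_isDup_bot hB hbb)))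
  · rcases hB.1.nodes v hmB with h | h | h | h
    · exact Or.inl ((contract_isRoot_iff hB).mpr h)
    · exact Or.inr (Or.inl ⟨hv, by rw [contract_inDeg_nonbot hB hnt hbb]; exact h.2.1,
        by rw [contract_outDeg hB hmB hnt]; exact h.2.2⟩)
    · obtain ⟨u, hu⟩ := hB.2 v hmB h.2.1
      exact absurd ⟨u, hu⟩ hbb
    · exact Or.inr (Or.inr (Or.inr ((contract_isLeaf_iff hB).mpr h)))

lemma contract_root : ∃! r, (contract B).IsRoot r := by
  obtain ⟨r, hr, hru⟩ := hB.1.root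
  exact ⟨r, (contract_isRoot_iff hB).mpr hr,
    fun w hw => hru w ((contract_isRoot_iff hB).mp hw)⟩

omit hB in
lemma contract_label_eq (hnt : ¬ B.IsTop v) : (contract B).label v = B.label v := by
  show (if B.IsTop v then none else B.label v) = _
  rw [if_neg hnt]

lemma contract_labels : (contract B).LabelsOnLeaves := by
  intro v
  rw [contract_isLeaf_iff hB]
  by_cases hnt : B.IsTop v
  · constructor
    · rintro ⟨x, hx⟩
      rw [show (contract B).label v = (if B.IsTop v then none else B.label v) from rfl,
        if_pos hnt] at hx
      exact absurd hx (by simp)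
    · intro hl
      have := (top_tree hB hnt).2.2
      have := hl.2.2
      omega
  · rw [contract_label_eq hnt]
    exact hB.1.labels v

lemma contract_labelsSub : ∀ v x, (contract B).label v = some x → x ∈ X := by
  intro v x hx
  by_cases hnt : B.IsTop v
  · rw [show (contract B).label v = (if B.IsTop v then none else B.label v) from rfl,
      if_pos hnt] at hx
    exact absurd hx (by simp)
  · rw [contract_label_eq hnt] at hx
    exact hB.1.labelsSub v x hx

lemma contract_labelsOnto : ∀ x ∈ X, ∃! v, (contract B).label v = some x := by
  intro x hx
  obtain ⟨v, hv, hvu⟩ := hB.1.labelsOnto x hx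
  have hnt : ¬ B.IsTop v := by
    intro ht
    have hl := (hB.1.labels v).mp ⟨x, hv⟩
    have := (top_tree hB ht).2.2
    have := hl.2.2
    omega
  refine ⟨v, ?_, ?_⟩
  · show (contract B).label v = some x
    rw [contract_label_eq hnt]
    exact hv
  intro w hw
  by_cases hntw : B.IsTop w
  · rw [show (contract B).label w = (if B.IsTop w then none else B.label w) from rfl,
      if_pos hntw] at hw
    exact absurd hw (by simp)
  · rw [contract_label_eq hntw] at hw
    exact hvu w hw

lemma contract_isDupTree : (contract B).IsDupTree X :=
  ⟨contract_root hB, contract_nodes hB, contract_acyclic hB, contract_simple hB,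
    contract_supported hB, contract_labels hB, contract_labelsSub hB, contract_labelsOnto hB⟩

lemma contract_inDeg_le_one : ∀ v ∈ (contract B).verts, (contract B).inDeg v ≤ 1 := by
  intro v hv
  rcases contract_nodes hB v hv with ⟨-, h1, -⟩ | ⟨-, h1, -⟩ | ⟨-, h1, -⟩ | ⟨-, h1, -⟩ <;> omega

lemma contract_isDup_iff (hv : v ∈ (contract B).verts) :
    ((contract B).inDeg v = 1 ∧ (contract B).outDeg v = 1) ↔ B.IsBot v := by
  obtain ⟨hmB, hnt⟩ := contract_mem.mp hv
  constructor
  · rintro ⟨h1, h2⟩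
    by_contra hbb
    rw [contract_inDeg_nonbot hB hnt hbb] at h1
    rw [contract_outDeg hB hmB hnt] at h2
    rcases hB.1.nodes v hmB with ⟨-, ha, hb⟩ | ⟨-, ha, hb⟩ | ⟨-, ha, hb⟩ | ⟨-, ha, hb⟩ <;> omega
  · intro hbb
    have := contract_isDup_bot hB hbb
    exact ⟨this.2.1, this.2.2⟩

end Contract2


section Contract3

variable {B T : DG} {X : Finset ℕ} (hB : B.IsBeadedTree X)

omit hB in
lemma walk_head {G : DG} {p : List Arc} {a b : ℕ} (hp : G.IsWalk p a b) :
    ∃ e rest, p = e :: rest ∧ e.1 = a ∧ G.ArcOK e ∧ G.Reaches e.2.1 b := by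
  cases p with
  | nil => exact absurd rfl hp.1
  | cons e rest =>
    have h := isWalk_cons.mp hp
    exact ⟨e, rest, rfl, h.1.symm, h.2.1, isWalk_tail_reaches hp⟩

omit hB in
lemma two_le_outDeg_of_arcs {G : DG} (hs : G.Supported) {x : ℕ} {e1 e2 : Arc}
    (h1 : G.ArcOK e1) (h2 : G.ArcOK e2)
    (hx1 : e1.1 = x) (hx2 : e2.1 = x) (hne : e1 ≠ e2) : 2 ≤ G.outDeg x := by
  have he1 : (x, e1.2.1, e1.2.2) = e1 := by rw [← hx1]
  have he2 : (x, e2.2.1, e2.2.2) = e2 := by rw [← hx2]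
  apply two_le_outDeg hs (c1 := e1.2.1) (i1 := e1.2.2) (c2 := e2.2.1) (i2 := e2.2.2)
  · rw [he1]; exact h1
  · rw [he2]; exact h2
  · intro hcon
    apply hne
    rw [← he1, ← he2, hcon]

include hB

/-- Projection of a single `B`-arc to the contraction. -/
lemma contract_step_adj {x y : ℕ} (hx : ¬ B.IsTop x) (hadj : B.Adj x y) :
    (contract B).Adj x (B.botOf y) := by
  have hty : ¬ B.IsTop (B.botOf y) := by
    by_cases hyt : B.IsTop y
    · exact fun htt => not_top_bot hB htt (botOf_isBot hyt)
    · rw [botOf_eq_self hyt]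
      exact hyt
  have hdef : (contract B).mult x (B.botOf y) =
      if B.IsTop x ∨ B.IsTop (B.botOf y) then 0 else B.mult x (B.topOf (B.botOf y)) := rfl
  rw [Adj, hdef, if_neg (by tauto)]
  by_cases hyt : B.IsTop y
  · rw [topOf_eq hB (botOf_mult hyt)]
    exact hadj
  · rw [botOf_eq_self hyt]
    by_cases hyb : B.IsBot y
    · exact absurd ((bot_in_unique hB hyb hadj) ▸ topOf_isTop hyb) hx
    · rw [topOf_eq_self hyb]
      exact hadj

lemma contract_step {x y : ℕ} (hadj : B.Adj x y) :
    B.botOf x = B.botOf y ∨ (contract B).Adj (B.botOf x) (B.botOf y) := by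
  by_cases hx : B.IsTop x
  · left
    have hy : y = B.botOf x := top_out_unique hB hx hadj
    have hyb : B.IsBot y := hy ▸ botOf_isBot hx
    rw [← hy, botOf_eq_self (fun ht => not_top_bot hB ht hyb)]
  · right
    rw [botOf_eq_self hx]
    exact contract_step_adj hB hx hadj

lemma contract_reaches {x y : ℕ} (h : B.Reaches x y) :
    (contract B).Reaches (B.botOf x) (B.botOf y) := by
  induction h with
  | refl => exact Relation.ReflTransGen.refl
  | tail _ hadj ih =>
    rcases contract_step hB hadj with heq | hstep
    · rw [← heq]; exact ih
    · exact ih.tail hstep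

lemma embed_bot_ne (hT : T.IsMulTree X) {h : ℕ → ℕ} {hE : ℕ → ℕ → List Arc}
    (hw : WeakEmbedding T B h hE) {u v : ℕ} (huv : T.Adj u v) :
    B.botOf (h u) ≠ B.botOf (h v) := by
  obtain ⟨hw1, hw2, hw3, hw4⟩ := hw
  intro heq
  have hwalk := hw3 u v huv
  have hsr : B.SReaches (h u) (h v) := hwalk.sreaches
  have hxy : h u ≠ h v := by
    intro he
    exact hB.1.acyclic (h v) (he ▸ hsr)
  by_cases htx : B.IsTop (h u) <;> by_cases hty : B.IsTop (h v)
  · -- both tops: then they are equal, contradiction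
    apply hxy
    rw [← topOf_eq hB (botOf_mult htx), ← topOf_eq hB (botOf_mult hty), heq]
  · -- h u a top, h v its bottom: impossible since v is a leaf or tree node
    rw [botOf_eq_self hty] at heq
    have hvbot : B.IsBot (h v) := heq ▸ botOf_isBot htx
    have hvmem : v ∈ T.verts := (hT.supported u v huv).2
    have hvin : 0 < T.inDeg v := adj_pos_inDeg hT.supported huv
    have hretic := bot_retic hB hvbot
    have hro := hretic.2.2
    rcases hT.nodes v hvmem with hroot | htree | hleaf
    · have := hroot.2.1
      omega
    · -- tree node: two children force out-degree ≥ 2 at h v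
      obtain ⟨z, z', hzz, hz, hz'⟩ := exists_two_children hT.supported hT.simple htree.2.2
      obtain ⟨e1, r1, hp1, hx1, hok1, -⟩ := walk_head (hw3 v z hz)
      obtain ⟨e2, r2, hp2, hx2, hok2, -⟩ := walk_head (hw3 v z' hz')
      have hhne := hw4 v z z' hz hz' hzz
      rw [hp1, hp2] at hhne
      simp only [List.head?_cons, ne_eq, Option.some_inj] at hhne
      have := two_le_outDeg_of_arcs hB.1.supported hok1 hok2 hx1 hx2 hhne
      omega
    · -- leaf: but a bead bottom is a reticulation
      have := (hw2 v hleaf).1.2.2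
      omega
  · -- h v a top, h u its bottom: gives a cycle
    rw [botOf_eq_self htx] at heq
    have hadj : B.Adj (h v) (h u) := by
      rw [Adj, heq, botOf_mult hty]
      omega
    exact hB.1.acyclic (h u) (hsr.tail hadj)
  · rw [botOf_eq_self htx, botOf_eq_self hty] at heq
    exact hxy heq

lemma contract_consistent (hT : T.IsMulTree X) (hdisp : B.Displays T) :
    (contract B).ConsistentWith T := by
  obtain ⟨h, hE, hw⟩ := hdisp
  obtain ⟨hw1, hw2, hw3, hw4⟩ := hw
  refine ⟨fun v => B.botOf (h v), ?_, ?_, ?_⟩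
  · -- leaves
    intro v hv
    dsimp only
    obtain ⟨hleaf, hlab⟩ := hw2 v hv
    have hnt : ¬ B.IsTop (h v) := by
      intro ht
      have := (top_tree hB ht).2.2
      have := hleaf.2.2
      omega
    rw [botOf_eq_self hnt]
    exact ⟨(contract_isLeaf_iff hB).mpr hleaf, by rw [contract_label_eq hnt]; exact hlab⟩
  · -- edges: strict reachability
    intro u v huv
    dsimp only
    have hreach := contract_reaches hB (hw3 u v huv).reaches
    exact sreaches_of_reaches_ne hreach (embed_bot_ne hB hT ⟨hw1, hw2, hw3, hw4⟩ huv)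
  · -- LCA or duplication
    intro u v v' h1 h2 hne
    dsimp only
    obtain ⟨e1, r1, hp1, hx1, hok1, hr1⟩ := walk_head (hw3 u v h1)
    obtain ⟨e2, r2, hp2, hx2, hok2, hr2⟩ := walk_head (hw3 u v' h2)
    have hhne := hw4 u v v' h1 h2 hne
    rw [hp1, hp2] at hhne
    simp only [List.head?_cons, ne_eq, Option.some_inj] at hhne
    have hout2 : 2 ≤ B.outDeg (h u) :=
      two_le_outDeg_of_arcs hB.1.supported hok1 hok2 hx1 hx2 hhne
    have hadj1 : B.Adj (h u) e1.2.1 := hx1 ▸ adj_of_mult_pos hok1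
    have hadj2 : B.Adj (h u) e2.2.1 := hx2 ▸ adj_of_mult_pos hok2
    by_cases htu : B.IsTop (h u)
    · -- duplication node
      right
      exact contract_isDup_bot hB (botOf_isBot htu)
    · -- LCA
      left
      rw [botOf_eq_self htu]
      have humem : h u ∈ B.verts := (hB.1.supported _ _ hadj1).1
      have houtD : B.outDeg (h u) = 2 := by
        rcases hB.1.nodes (h u) humem with ⟨-,-,hd⟩ | ⟨-,-,hd⟩ | ⟨-,-,hd⟩ | ⟨-,-,hd⟩ <;> omega
      have hd1 : (contract B).Adj (h u) (B.botOf e1.2.1) := contract_step_adj hB htu hadj1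
      have hd2 : (contract B).Adj (h u) (B.botOf e2.2.1) := contract_step_adj hB htu hadj2
      have hcne : e1.2.1 ≠ e2.2.1 ∨ (e1.2.1 = e2.2.1 ∧ e1.2.2 ≠ e2.2.2) := by
        by_cases hc : e1.2.1 = e2.2.1
        · refine Or.inr ⟨hc, ?_⟩
          intro hi
          apply hhne
          have p1 : e1 = (e1.1, e1.2.1, e1.2.2) := rfl
          have p2 : e2 = (e2.1, e2.2.1, e2.2.2) := rfl
          rw [p1, p2, hx1, hx2, hc, hi]
        · exact Or.inl hc
      have hbne : B.botOf e1.2.1 ≠ B.botOf e2.2.1 := by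
        rcases hcne with hc | ⟨hc, hi⟩
        · -- distinct children have distinct bottoms
          intro hbe
          by_cases ht1 : B.IsTop e1.2.1 <;> by_cases ht2 : B.IsTop e2.2.1
          · exact hc (by rw [← topOf_eq hB (botOf_mult ht1), ← topOf_eq hB (botOf_mult ht2), hbe])
          · rw [botOf_eq_self ht2] at hbe
            have hb2 : B.IsBot e2.2.1 := hbe ▸ botOf_isBot ht1
            have := bot_in_unique hB hb2 hadj2
            rw [topOf_eq hB (hbe ▸ botOf_mult ht1)] at this
            exact htu (this ▸ ht1)
          · rw [botOf_eq_self ht1] at hbe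
            have hb1 : B.IsBot e1.2.1 := hbe ▸ botOf_isBot ht2
            have := bot_in_unique hB hb1 hadj1
            rw [topOf_eq hB (hbe ▸ botOf_mult ht2)] at this
            exact htu (this ▸ ht2)
          · rw [botOf_eq_self ht1, botOf_eq_self ht2] at hbe
            exact hc hbe
        · -- same child, two parallel arcs: the parent would be a top
          exfalso
          have h2m : 2 ≤ B.mult (h u) e1.2.1 := by
            simp only [ArcOK] at hok1 hok2
            rw [hx1] at hok1
            rw [hx2, ← hc] at hok2
            omega
          exact htu ⟨e1.2.1, (net_mult_bot hB h2m).1⟩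
      have hRa : (contract B).Reaches (B.botOf (h u)) (B.botOf (h v)) :=
        contract_reaches hB (hw3 u v h1).reaches
      have hRb : (contract B).Reaches (B.botOf (h u)) (B.botOf (h v')) :=
        contract_reaches hB (hw3 u v' h2).reaches
      rw [botOf_eq_self htu] at hRa hRb
      refine ⟨hRa, hRb, ?_⟩
      intro w hsw hcon
      obtain ⟨hwv, hwv'⟩ := hcon
      have hCs := contract_supported hB
      have hCa := contract_acyclic hB
      have hCin := contract_inDeg_le_one hB
      obtain ⟨e, he, hew⟩ := (Relation.TransGen.head'_iff).mp hsw
      have hCout : (contract B).outDeg (h u) = 2 := by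
        rw [contract_outDeg hB humem htu]
        exact houtD
      have hreach1 : (contract B).Reaches (B.botOf e1.2.1) (B.botOf (h v)) :=
        contract_reaches hB hr1
      have hreach2 : (contract B).Reaches (B.botOf e2.2.1) (B.botOf (h v')) :=
        contract_reaches hB hr2
      rcases adj_mem_pair hCs hCout hd1 hd2 hbne he with rfl | rfl
      · exact forest_disjoint_cones hCs hCa hCin hd1 hd2 hbne
          (Relation.ReflTransGen.trans hew hwv') hreach2
      · exact forest_disjoint_cones hCs hCa hCin hd1 hd2 hbne hreach1
          (Relation.ReflTransGen.trans hew hwv)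

end Contract3


section Contract4

variable {B : DG} {X : Finset ℕ} (hB : B.IsBeadedTree X)

noncomputable def cLiftArc (B : DG) (e : Arc) : List Arc :=
  if B.IsBot e.2.1 then [(e.1, B.topOf e.2.1, e.2.2), (B.topOf e.2.1, e.2.1, 0)] else [e]

noncomputable def cLift (B : DG) (p : List Arc) : List Arc := p.flatMap (cLiftArc B)

include hB

lemma contract_arcOK {e : Arc} (hok : (contract B).ArcOK e) :
    B.ArcOK (e.1, B.topOf e.2.1, e.2.2) ∧ ¬ B.IsTop e.1 ∧ ¬ B.IsTop e.2.1 := by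
  have hpos : 0 < (contract B).mult e.1 e.2.1 := by
    have := hok
    simp only [ArcOK] at this
    omega
  obtain ⟨ht1, ht2, hadj⟩ := contract_mult_pos hB hpos
  refine ⟨?_, ht1, ht2⟩
  show e.2.2 < B.mult e.1 (B.topOf e.2.1)
  have hdef : (contract B).mult e.1 e.2.1 =
      if B.IsTop e.1 ∨ B.IsTop e.2.1 then 0 else B.mult e.1 (B.topOf e.2.1) := rfl
  have hok' := hok
  simp only [ArcOK] at hok'
  rw [hdef, if_neg (by tauto)] at hok'
  exact hok'

lemma cLiftArc_isWalk {e : Arc} (hok : (contract B).ArcOK e) :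
    B.IsWalk (cLiftArc B e) e.1 e.2.1 := by
  obtain ⟨hokB, ht1, ht2⟩ := contract_arcOK hB hok
  rw [cLiftArc]
  by_cases hbb : B.IsBot e.2.1
  · rw [if_pos hbb]
    rw [isWalk_cons]
    refine ⟨rfl, hokB, Or.inr ?_⟩
    have h2 : B.ArcOK (B.topOf e.2.1, e.2.1, 0) := by
      show 0 < B.mult (B.topOf e.2.1) e.2.1
      rw [topOf_mult hbb]
      omega
    exact isWalk_singleton h2
  · rw [if_neg hbb]
    have := isWalk_singleton (G := B) (e := e) ?_
    · exact this
    · rw [topOf_eq_self hbb] at hokB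
      exact hokB

lemma cLift_isWalk {p : List Arc} {a b : ℕ} (hp : (contract B).IsWalk p a b) :
    B.IsWalk (cLift B p) a b := by
  induction p generalizing a with
  | nil => exact absurd rfl hp.1
  | cons e rest ih =>
    rw [isWalk_cons] at hp
    obtain ⟨rfl, hok, hrest⟩ := hp
    rw [cLift, List.flatMap_cons]
    rcases hrest with ⟨rfl, rfl⟩ | hw
    · simpa [cLift] using cLiftArc_isWalk hB hok
    · exact (cLiftArc_isWalk hB hok).append (ih hw)

lemma contract_dups_eq_botsrc : ∀ {p : List Arc} {a b : ℕ}, (contract B).IsWalk p a b →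
    (contract B).dupsOnWalk p = p.countP (fun e => decide (B.IsBot e.1)) := by
  intro p
  induction p with
  | nil => intro a b hp; exact absurd rfl hp.1
  | cons e rest ih =>
    intro a b hp
    rw [isWalk_cons] at hp
    obtain ⟨rfl, hok, hrest⟩ := hp
    have htail : (contract B).dupsOnWalk rest =
        rest.countP (fun e => decide (B.IsBot e.1)) := by
      rcases hrest with ⟨rfl, -⟩ | hw
      · simp [dupsOnWalk]
      · exact ih hw
    have hmem : e.1 ∈ (contract B).verts := by
      have hpos : 0 < (contract B).mult e.1 e.2.1 := by
        have := hok; simp only [ArcOK] at this; omega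
      exact (contract_supported hB e.1 e.2.1 hpos).1
    have hiff := contract_isDup_iff hB hmem
    simp only [dupsOnWalk, List.countP_cons, decide_eq_true_eq] at htail ⊢
    rw [htail]
    congr 1
    by_cases hd : (contract B).inDeg e.1 = 1 ∧ (contract B).outDeg e.1 = 1
    · rw [if_pos hd, if_pos (hiff.mp hd)]
    · rw [if_neg hd, if_neg (fun hb => hd (hiff.mpr hb))]

lemma contract_beads_cLift : ∀ {p : List Arc} {a b : ℕ}, (contract B).IsWalk p a b →
    B.beadsOnWalk (cLift B p) = p.countP (fun e => decide (B.IsBot e.2.1)) := by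
  intro p
  induction p with
  | nil => intro a b hp; exact absurd rfl hp.1
  | cons e rest ih =>
    intro a b hp
    rw [isWalk_cons] at hp
    obtain ⟨rfl, hok, hrest⟩ := hp
    obtain ⟨hokB, ht1, ht2⟩ := contract_arcOK hB hok
    have htail : B.beadsOnWalk (cLift B rest) =
        rest.countP (fun e => decide (B.IsBot e.2.1)) := by
      rcases hrest with ⟨rfl, -⟩ | hw
      · simp [beadsOnWalk, cLift]
      · exact ih hw
    have hsplit : cLift B (e :: rest) = cLiftArc B e ++ cLift B rest := by
      rw [cLift, List.flatMap_cons]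
      rfl
    have hmain : ¬ (B.mult e.1 (B.topOf e.2.1) = 2) := by
      intro h2
      exact ht1 ⟨B.topOf e.2.1, h2⟩
    have hhead : List.countP (fun f => decide (B.mult f.1 f.2.1 = 2)) (cLiftArc B e) =
        (if B.IsBot e.2.1 then 1 else 0) := by
      rw [cLiftArc]
      by_cases hbb : B.IsBot e.2.1
      · rw [if_pos hbb, if_pos hbb]
        have hbead := topOf_mult hbb
        simp [List.countP_cons, hmain, hbead]
      · rw [if_neg hbb, if_neg hbb]
        have hm2 : ¬ (B.mult e.1 e.2.1 = 2) := by
          rw [topOf_eq_self hbb] at hmain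
          exact hmain
        simp [List.countP_cons, hm2]
    rw [beadsOnWalk, hsplit, List.countP_append]
    rw [beadsOnWalk] at htail
    rw [htail, hhead, List.countP_cons]
    simp only [decide_eq_true_eq]
    split_ifs <;> omega

lemma contract_botsrc_le_bottgt : ∀ {p : List Arc} {a b : ℕ}, (contract B).IsWalk p a b →
    p.countP (fun e => decide (B.IsBot e.1)) ≤
      p.countP (fun e => decide (B.IsBot e.2.1)) + (if B.IsBot a then 1 else 0) := by
  intro p
  induction p with
  | nil => intro a b hp; exact absurd rfl hp.1
  | cons e rest ih =>
    intro a b hp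
    rw [isWalk_cons] at hp
    obtain ⟨rfl, hok, hrest⟩ := hp
    simp only [List.countP_cons, decide_eq_true_eq]
    rcases hrest with ⟨rfl, rfl⟩ | hw
    · simp only [List.countP_nil]
      split_ifs <;> omega
    · have ihh := ih hw
      split_ifs at ihh ⊢ <;> omega

lemma contract_depth {d : ℕ}
    (hbound : ∀ (p : List Arc) (a b : ℕ), B.IsWalk p a b → B.beadsOnWalk p ≤ d) :
    ∀ (p : List Arc) (r l : ℕ), (contract B).IsRoot r → (contract B).IsLeafNode l →
      (contract B).IsWalk p r l → (contract B).dupsOnWalk p ≤ d := by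
  intro p r l hr hl hp
  have hlift := cLift_isWalk hB hp
  have hbd := hbound _ _ _ hlift
  have hnb : ¬ B.IsBot r := by
    intro hb
    have := (bot_retic hB hb).2.1
    have := ((contract_isRoot_iff hB).mp hr).2.1
    omega
  have h1 := contract_dups_eq_botsrc hB hp
  have h2 := contract_beads_cLift hB hp
  have h3 := contract_botsrc_le_bottgt hB hp
  rw [if_neg hnb] at h3
  omega

end Contract4

-- APPEND HERE
end DG


/-- there is a duplication tree on `X` consistent with every
MUL-tree in `𝒯` having at most `d` duplication nodes on every root-to-leaf
path iff there is a beaded tree on `X` weakly displaying every MUL-tree in `𝒯`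
having at most `d` beads on every directed path. -/
theorem dup_depth_iff_bead_depth (X : Finset ℕ) (Ts : Set DG)
    (hT : ∀ T ∈ Ts, DG.IsMulTree X T) (d : ℕ) :
    (∃ D : DG, DG.IsDupTree X D ∧ (∀ T ∈ Ts, D.ConsistentWith T) ∧
      ∀ (p : List DG.Arc) (r l : ℕ), D.IsRoot r → D.IsLeafNode l → D.IsWalk p r l →
        D.dupsOnWalk p ≤ d) ↔
    (∃ B : DG, DG.IsBeadedTree X B ∧ (∀ T ∈ Ts, B.Displays T) ∧
      ∀ (p : List DG.Arc) (a b : ℕ), B.IsWalk p a b → B.beadsOnWalk p ≤ d) := by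
  constructor
  · rintro ⟨D, hD, hcons, hdepth⟩
    exact ⟨DG.expand D, DG.expand_isBeadedTree hD,
      fun T hTs => DG.expand_displays hD (hT T hTs) (hcons T hTs),
      DG.expand_depth hD hdepth⟩
  · rintro ⟨B, hB, hdisp, hdepth⟩
    exact ⟨DG.contract B, DG.contract_isDupTree hB,
      fun T hTs => DG.contract_consistent hB (hT T hTs) (hdisp T hTs),
      DG.contract_depth hB hdepth⟩
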